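/- arXiv:2305.03158 — 3 statements merged into one kernel-verified Lean document; each statement's English description precedes it below -/
import Mathlib

section
/- Let Λ : ℝ → ℝ be twice differentiable on [0,1] with |Λ''(u)| ≤ C on [0,1], and set Z = ∫₀^1 Λ(s) ds. Let U₁, …, Uₙ be i.i.d. Uniform(0,1) with order statistics U₍₁₎ ≤ ⋯ ≤ U₍ₙ₎, U₍₀₎ = 0, U₍ₙ₊₁₎ = 1, and let Ẑ_QIS = (1/2)·Σ_{i=1}^{n+1} (U₍ᵢ₎ − U₍ᵢ₋₁₎)·(Λ(U₍ᵢ₋₁₎) + Λ(U₍ᵢ₎)). Then E[(Z − Ẑ_QIS)²] ≤ C²·(n+20) / (4·(n+2)(n+3)(n+4)(n+5)(n+6)). -/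
open MeasureTheory


open MeasureTheory

/-- The augmented order statistics of `u : Fin n → ℝ`:
`orderStatAug n u i = U₍ᵢ₎` for `1 ≤ i ≤ n` (the `i`-th smallest value,
obtained by sorting), with the convention `U₍₀₎ = 0` and `U₍ₙ₊₁₎ = 1`. -/
noncomputable def orderStatAug (n : ℕ) (u : Fin n → ℝ) : ℕ → ℝ := fun i =>
  if i = 0 then 0
  else if i = n + 1 then 1
  else ((List.ofFn u).mergeSort (fun a b => a ≤ b)).getD (i - 1) 0

/-- The spacings `Z_i = U₍ᵢ₎ − U₍ᵢ₋₁₎` of the augmented order statistics. -/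
noncomputable def spacing (n : ℕ) (u : Fin n → ℝ) (i : ℕ) : ℝ :=
  orderStatAug n u i - orderStatAug n u (i - 1)

/-- The joint law of `n` i.i.d. `Uniform(0,1)` random variables: the product
of Lebesgue measures on `[0,1]ⁿ`. -/
noncomputable def iidUniform (n : ℕ) : Measure (Fin n → ℝ) :=
  Measure.pi fun _ : Fin n => volume.restrict (Set.Icc (0:ℝ) 1)

/-- The quantile importance sampling (QIS, trapezoid) estimator
`Ẑ_QIS = (1/2)·Σ_{i=1}^{n+1} (U₍ᵢ₎ − U₍ᵢ₋₁₎)·(Λ(U₍ᵢ₋₁₎) + Λ(U₍ᵢ₎))`. -/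
noncomputable def qis (Λ : ℝ → ℝ) (n : ℕ) (u : Fin n → ℝ) : ℝ :=
  (1 / 2) * ∑ i ∈ Finset.range (n + 1),
    (orderStatAug n u (i + 1) - orderStatAug n u i)
      * (Λ (orderStatAug n u i) + Λ (orderStatAug n u (i + 1)))


open Finset Set

noncomputable def aug (n : ℕ) (x : Fin n → ℝ) (i : ℕ) : ℝ :=
  if h : 1 ≤ i ∧ i ≤ n then x ⟨i - 1, by omega⟩ else if i = 0 then 0 else 1

noncomputable def Pgap (n : ℕ) (a : ℕ → ℕ) (x : Fin n → ℝ) : ℝ :=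
  ∏ i ∈ Finset.range (n+1), (aug n x (i+1) - aug n x i) ^ (a i)

def InCube (n : ℕ) (x : Fin n → ℝ) : Prop := ∀ j, x j ∈ Set.Icc (0:ℝ) 1

lemma aug_zero (n : ℕ) (x : Fin n → ℝ) : aug n x 0 = 0 := by simp [aug]

lemma aug_top (n : ℕ) (x : Fin n → ℝ) : aug n x (n+1) = 1 := by
  simp only [aug]
  rw [dif_neg (by omega)]
  simp

lemma aug_mem (n : ℕ) (x : Fin n → ℝ) (hx : InCube n x) (i : ℕ) :
    aug n x i ∈ Set.Icc (0:ℝ) 1 := by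
  unfold aug
  split
  · exact hx _
  · split <;> simp

lemma aug_le (n : ℕ) (x : Fin n → ℝ) (hm : Monotone x) (hx : InCube n x)
    {i : ℕ} (hi : i ≤ n) : aug n x i ≤ aug n x (i+1) := by
  unfold aug
  rcases Nat.eq_zero_or_pos i with h0 | h1
  · subst h0
    rw [dif_neg (by omega)]
    rw [if_pos rfl]
    by_cases hn : 1 ≤ 0 + 1 ∧ 0 + 1 ≤ n
    · rw [dif_pos hn]; exact (hx _).1
    · rw [dif_neg hn]; norm_num
  · rw [dif_pos ⟨h1, hi⟩]
    by_cases hii : i + 1 ≤ n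
    · rw [dif_pos ⟨by omega, hii⟩]
      exact hm (by simp only [Fin.mk_le_mk]; omega)
    · rw [dif_neg (by omega), if_neg (by omega)]
      exact (hx _).2

lemma aug_snoc (n : ℕ) (y : Fin n → ℝ) (t : ℝ) {i : ℕ} (hi : i ≤ n) :
    aug (n+1) (Fin.snoc y t) i = aug n y i := by
  unfold aug
  by_cases h : 1 ≤ i ∧ i ≤ n
  · rw [dif_pos ⟨h.1, by omega⟩, dif_pos h]
    have hlt : i - 1 < n := by omega
    have : (⟨i - 1, by omega⟩ : Fin (n+1)) = Fin.castSucc ⟨i - 1, hlt⟩ := rfl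
    rw [this, Fin.snoc_castSucc]
  · have hi0 : i = 0 := by omega
    subst hi0
    rw [dif_neg (by omega), dif_neg (by omega)]

lemma aug_snoc_top (n : ℕ) (y : Fin n → ℝ) (t : ℝ) :
    aug (n+1) (Fin.snoc y t) (n+1) = t := by
  unfold aug
  rw [dif_pos ⟨by omega, le_rfl⟩]
  have : (⟨n + 1 - 1, by omega⟩ : Fin (n+1)) = Fin.last n := rfl
  rw [this, Fin.snoc_last]

lemma monotone_snoc_iff (n : ℕ) (y : Fin n → ℝ) (t : ℝ) (ht : t ∈ Set.Icc (0:ℝ) 1) :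
    Monotone (Fin.snoc y t : Fin (n+1) → ℝ) ↔ (Monotone y ∧ aug n y n ≤ t) := by
  rcases n with _ | m
  · constructor
    · intro _
      refine ⟨fun i => i.elim0, ?_⟩
      rw [aug_zero]
      exact ht.1
    · intro _
      intro i j _
      have hi := i.isLt
      have hj := j.isLt
      have : i = j := Fin.ext (by omega)
      rw [this]
  · have haug : aug (m+1) y (m+1) = y (Fin.last m) := by
      unfold aug
      rw [dif_pos ⟨by omega, le_rfl⟩]
      rfl
    rw [haug]
    constructor
    · intro h
      constructor
      · intro i j hij
        have := h (show (Fin.castSucc i) ≤ Fin.castSucc j by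
          rwa [Fin.castSucc_le_castSucc_iff])
        simpa [Fin.snoc_castSucc] using this
      · have := h (Fin.le_last (Fin.castSucc (Fin.last m)))
        simpa [Fin.snoc_castSucc, Fin.snoc_last] using this
    · rintro ⟨hy, hle⟩
      intro i j hij
      revert hij
      induction j using Fin.lastCases with
      | last =>
        induction i using Fin.lastCases with
        | last => intro _; exact le_rfl
        | cast i' =>
          intro _
          rw [Fin.snoc_castSucc, Fin.snoc_last]
          exact le_trans (hy (Fin.le_last i')) hle
      | cast j' =>
        induction i using Fin.lastCases with
        | last =>
          intro hij
          exact absurd hij (not_le.mpr (Fin.castSucc_lt_last j'))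
        | cast i' =>
          intro hij
          rw [Fin.snoc_castSucc, Fin.snoc_castSucc]
          exact hy (by rwa [Fin.castSucc_le_castSucc_iff] at hij)

lemma mergeSort_eq (n : ℕ) (u : Fin n → ℝ) (σ : Equiv.Perm (Fin n)) (h : Monotone (u ∘ σ)) :
    (List.ofFn u).mergeSort (fun a b => a ≤ b) = List.ofFn (u ∘ σ) := by
  exact List.Perm.eq_of_sortedLE List.sortedLE_mergeSort h.sortedLE_ofFn
    ((List.mergeSort_perm _ _).trans (σ.ofFn_comp_perm u).symm)

lemma orderStatAug_eq (n : ℕ) (u : Fin n → ℝ) (σ : Equiv.Perm (Fin n))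
    (h : Monotone (u ∘ σ)) : ∀ i ≤ n + 1, orderStatAug n u i = aug n (u ∘ σ) i := by
  intro i hi
  unfold orderStatAug aug
  by_cases h0 : i = 0
  · subst h0; simp
  by_cases htop : i = n + 1
  · subst htop
    rw [if_neg h0, if_pos rfl, dif_neg (by omega), if_neg h0]
  · have h1n : 1 ≤ i ∧ i ≤ n := by omega
    rw [if_neg h0, if_neg htop, dif_pos h1n, mergeSort_eq n u σ h]
    have hlt : i - 1 < (List.ofFn (u ∘ σ)).length := by simp; omega
    rw [List.getD_eq_getElem _ _ hlt, List.getElem_ofFn]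

lemma qis_eq (Λ : ℝ → ℝ) (n : ℕ) (u : Fin n → ℝ) (σ : Equiv.Perm (Fin n))
    (h : Monotone (u ∘ σ)) :
    qis Λ n u = (1/2) * ∑ i ∈ Finset.range (n+1),
      (aug n (u ∘ σ) (i+1) - aug n (u ∘ σ) i)
        * (Λ (aug n (u ∘ σ) i) + Λ (aug n (u ∘ σ) (i+1))) := by
  unfold qis
  congr 1
  refine Finset.sum_congr rfl fun i hi => ?_
  have hi' : i ≤ n := by simpa [Nat.lt_succ_iff] using hi
  rw [orderStatAug_eq n u σ h i (by omega), orderStatAug_eq n u σ h (i+1) (by omega)]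

instance (n : ℕ) : IsProbabilityMeasure (iidUniform n) := by
  have : IsProbabilityMeasure (volume.restrict (Set.Icc (0:ℝ) 1)) := by
    constructor
    rw [Measure.restrict_apply_univ, Real.volume_Icc]
    norm_num
  exact MeasureTheory.Measure.pi.instIsProbabilityMeasure _

lemma ae_cube (n : ℕ) : ∀ᵐ x ∂iidUniform n, InCube n x := by
  have hmeas : MeasurableSet (Set.univ.pi fun _ : Fin n => Set.Icc (0:ℝ) 1) :=
    MeasurableSet.univ_pi fun _ => measurableSet_Icc
  have hone : iidUniform n (Set.univ.pi fun _ : Fin n => Set.Icc (0:ℝ) 1) = 1 := by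
    rw [iidUniform, Measure.pi_pi]
    simp [Measure.restrict_apply measurableSet_Icc, Real.volume_Icc]
  have hcompl : iidUniform n (Set.univ.pi fun _ : Fin n => Set.Icc (0:ℝ) 1)ᶜ = 0 := by
    rw [measure_compl hmeas (measure_ne_top _ _), hone, measure_univ, tsub_self]
  rw [ae_iff]
  have hset : {x | ¬ InCube n x} = (Set.univ.pi fun _ : Fin n => Set.Icc (0:ℝ) 1)ᶜ := by
    ext x
    simp only [Set.mem_setOf_eq, Set.mem_compl_iff, Set.mem_pi, Set.mem_univ,
      forall_true_left, InCube]
  rw [hset]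
  exact hcompl

lemma measurable_aug (n : ℕ) (i : ℕ) : Measurable (fun x : Fin n → ℝ => aug n x i) := by
  unfold aug
  by_cases h : 1 ≤ i ∧ i ≤ n
  · simp only [dif_pos h]; exact measurable_pi_apply _
  · simp only [dif_neg h]; exact measurable_const

lemma measurableSet_mono (n : ℕ) : MeasurableSet {x : Fin n → ℝ | Monotone x} := by
  have : {x : Fin n → ℝ | Monotone x}
      = ⋂ (i : Fin n), ⋂ (j : Fin n), ⋂ (_ : i ≤ j), {x : Fin n → ℝ | x i ≤ x j} := by
    ext x
    simp only [Set.mem_setOf_eq, Set.mem_iInter]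
    exact ⟨fun h i j hij => h hij, fun h i j hij => h i j hij⟩
  rw [this]
  exact MeasurableSet.iInter fun i => MeasurableSet.iInter fun j =>
    MeasurableSet.iInter fun _ =>
      measurableSet_le (measurable_pi_apply i) (measurable_pi_apply j)

lemma measurable_Pgap (n : ℕ) (a : ℕ → ℕ) : Measurable (Pgap n a) := by
  unfold Pgap
  exact Finset.measurable_prod _ fun i _ =>
    ((measurable_aug n (i+1)).sub (measurable_aug n i)).pow_const _

lemma integrable_of_cube_bound (n : ℕ) (F : (Fin n → ℝ) → ℝ) (B : ℝ)
    (hF : AEStronglyMeasurable F (iidUniform n))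
    (h : ∀ x, InCube n x → |F x| ≤ B) : Integrable F (iidUniform n) :=
  ⟨hF, MeasureTheory.HasFiniteIntegral.of_bounded (C := B)
    ((ae_cube n).mono fun x hx => by simpa [Real.norm_eq_abs] using h x hx)⟩

lemma integral_comp_perm (n : ℕ) (F : (Fin n → ℝ) → ℝ) (σ : Equiv.Perm (Fin n)) :
    ∫ u, F (u ∘ σ) ∂iidUniform n = ∫ x, F x ∂iidUniform n := by
  have hmp := measurePreserving_piCongrLeft
    (fun _ : Fin n => volume.restrict (Set.Icc (0:ℝ) 1)) (σ.symm : Fin n ≃ Fin n)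
  have he : ∀ x : Fin n → ℝ,
      (MeasurableEquiv.piCongrLeft (fun _ => ℝ) (σ.symm : Fin n ≃ Fin n)) x = x ∘ σ := by
    intro x
    funext i
    rw [MeasurableEquiv.coe_piCongrLeft]
    have h1 := Equiv.piCongrLeft_apply_apply (P := fun _ : Fin n => ℝ)
      (e := (σ.symm : Fin n ≃ Fin n)) x (σ i)
    rw [Equiv.symm_apply_apply] at h1
    exact h1
  have h2 := hmp.integral_comp' F
  simp_rw [he] at h2
  exact h2

section Trap
variable (Λ Λd Λdd : ℝ → ℝ) (C : ℝ)

lemma taylor1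
    (hΛ : ∀ u ∈ Set.Icc (0:ℝ) 1, HasDerivWithinAt Λ (Λd u) (Set.Icc (0:ℝ) 1) u)
    (hΛd : ∀ u ∈ Set.Icc (0:ℝ) 1, HasDerivWithinAt Λd (Λdd u) (Set.Icc (0:ℝ) 1) u)
    (hC : ∀ u ∈ Set.Icc (0:ℝ) 1, |Λdd u| ≤ C)
    {a t : ℝ} (ha : 0 ≤ a) (hat : a ≤ t) (ht : t ≤ 1) :
    |Λ t - Λ a - (t - a) * Λd t| ≤ C * (t - a)^2 / 2 := by
  have hLip : ∀ x ∈ Set.Icc (0:ℝ) 1, ∀ y ∈ Set.Icc (0:ℝ) 1, ‖Λd y - Λd x‖ ≤ C * ‖y - x‖ := by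
    intro x hx y hy
    exact Convex.norm_image_sub_le_of_norm_hasDerivWithin_le hΛd
      (fun u hu => by simpa [Real.norm_eq_abs] using hC u hu) (convex_Icc 0 1) hx hy
  set H : ℝ → ℝ := fun r => Λ t - Λ (t - r) - r * Λd t with hH
  have hmem : ∀ r ∈ Set.Icc (0:ℝ) (t - a), t - r ∈ Set.Icc (0:ℝ) 1 := by
    intro r hr
    constructor <;> [skip; skip] <;> nlinarith [hr.1, hr.2]
  have hΛcont : ContinuousOn Λ (Set.Icc (0:ℝ) 1) :=
    fun u hu => (hΛ u hu).continuousWithinAt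
  have hHcont : ContinuousOn H (Set.Icc 0 (t - a)) := by
    apply ContinuousOn.sub
    · apply ContinuousOn.sub continuousOn_const
      exact hΛcont.comp ((continuous_const.sub continuous_id).continuousOn) hmem
    · exact (continuous_id.mul continuous_const).continuousOn
  have hH' : ∀ r ∈ Set.Ico (0:ℝ) (t - a),
      HasDerivWithinAt H (Λd (t - r) - Λd t) (Set.Ici r) r := by
    intro r hr
    have h0 : HasDerivWithinAt (fun r : ℝ => t - r) (-1) (Set.Icc r (t - a)) r :=
      ((hasDerivAt_id r).const_sub t).hasDerivWithinAt
    have hmemr : t - r ∈ Set.Icc (0:ℝ) 1 := hmem r ⟨hr.1, hr.2.le⟩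
    have hmaps : Set.MapsTo (fun r : ℝ => t - r) (Set.Icc r (t - a)) (Set.Icc (0:ℝ) 1) := by
      intro r' hr'
      exact hmem r' ⟨le_trans hr.1 hr'.1, hr'.2⟩
    have h1 : HasDerivWithinAt (fun r : ℝ => Λ (t - r)) (Λd (t - r) * (-1))
        (Set.Icc r (t - a)) r :=
      HasDerivWithinAt.comp r (hΛ (t - r) hmemr) h0 hmaps
    have h2 : HasDerivWithinAt H (-(Λd (t - r) * (-1)) - Λd t) (Set.Icc r (t - a)) r := by
      exact (h1.const_sub (Λ t)).sub
        (((hasDerivAt_id r).mul_const (Λd t)).hasDerivWithinAt.congr_deriv (by ring))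
    have h3 : HasDerivWithinAt H (Λd (t - r) - Λd t) (Set.Icc r (t - a)) r := by
      convert h2 using 1; ring
    exact h3.mono_of_mem_nhdsWithin (Icc_mem_nhdsGE hr.2)
  have hB : ∀ x : ℝ, HasDerivAt (fun r => C * r^2 / 2) (C * x) x := by
    intro x
    have := ((hasDerivAt_pow 2 x).const_mul C).div_const 2
    refine this.congr_deriv ?_
    norm_num
    ring
  have hbound : ∀ r ∈ Set.Ico (0:ℝ) (t - a), ‖Λd (t - r) - Λd t‖ ≤ C * r := by
    intro r hr
    have := hLip t ⟨le_trans ha hat, ht⟩ (t - r) (hmem r ⟨hr.1, hr.2.le⟩)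
    simpa [abs_of_nonneg hr.1] using this
  have key := image_norm_le_of_norm_deriv_right_le_deriv_boundary hHcont hH'
    (by simp [hH]) hB hbound (x := t - a) ⟨by linarith, le_rfl⟩
  have hHta : H (t - a) = Λ t - Λ a - (t - a) * Λd t := by
    simp [hH, sub_sub_cancel]
  rw [hHta] at key
  simpa [Real.norm_eq_abs] using key

lemma trap_bound
    (hΛ : ∀ u ∈ Set.Icc (0:ℝ) 1, HasDerivWithinAt Λ (Λd u) (Set.Icc (0:ℝ) 1) u)
    (hΛd : ∀ u ∈ Set.Icc (0:ℝ) 1, HasDerivWithinAt Λd (Λdd u) (Set.Icc (0:ℝ) 1) u)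
    (hC : ∀ u ∈ Set.Icc (0:ℝ) 1, |Λdd u| ≤ C)
    {a b : ℝ} (ha : 0 ≤ a) (hab : a ≤ b) (hb : b ≤ 1) :
    |(∫ s in a..b, Λ s) - (b - a) * (Λ a + Λ b) / 2| ≤ C * (b - a)^3 / 12 := by
  have hΛcont : ContinuousOn Λ (Set.Icc (0:ℝ) 1) :=
    fun u hu => (hΛ u hu).continuousWithinAt
  set π : ℝ → ℝ := fun s => max 0 (min 1 s) with hπ
  have hπmem : ∀ s, π s ∈ Set.Icc (0:ℝ) 1 := by
    intro s
    exact ⟨le_max_left _ _, max_le (by norm_num) (min_le_left _ _)⟩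
  have hπid : ∀ s ∈ Set.Icc (0:ℝ) 1, π s = s := by
    intro s hs
    simp [hπ, min_eq_right hs.2, max_eq_right hs.1]
  set Λc : ℝ → ℝ := fun s => Λ (π s) with hΛc
  have hΛceq : ∀ s ∈ Set.Icc (0:ℝ) 1, Λc s = Λ s := fun s hs => by
    simp [hΛc, hπid s hs]
  have hπcont : Continuous π := continuous_const.max (continuous_const.min continuous_id)
  have hΛccont : Continuous Λc := hΛcont.comp_continuous hπcont hπmem
  have hI : ∀ t : ℝ, HasDerivAt (fun t => ∫ s in a..t, Λc s) (Λc t) t := by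
    intro t
    apply intervalIntegral.integral_hasDerivAt_right
      (hΛccont.intervalIntegrable _ _)
      ⟨Set.univ, Filter.univ_mem, (hΛccont.stronglyMeasurable).aestronglyMeasurable.restrict⟩
      hΛccont.continuousAt
  set E : ℝ → ℝ := fun t => (∫ s in a..t, Λc s) - (t - a) * (Λ a + Λc t) / 2 with hE
  have hEa : E a = 0 := by simp [hE]
  have hEcont : ContinuousOn E (Set.Icc a b) := by
    apply ContinuousOn.sub
    · exact fun t _ => (hI t).continuousAt.continuousWithinAt
    · exact Continuous.continuousOn (by
        exact ((continuous_id.sub continuous_const).mul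
          (continuous_const.add hΛccont)).div_const 2)
  have hE' : ∀ t ∈ Set.Ico a b, HasDerivWithinAt E
      ((Λ t - Λ a - (t - a) * Λd t) / 2) (Set.Ici t) t := by
    intro t htmem
    have ht01 : t ∈ Set.Icc (0:ℝ) 1 := ⟨le_trans ha htmem.1, le_trans htmem.2.le hb⟩
    have ht1 : t < 1 := lt_of_lt_of_le htmem.2 hb
    have hΛW : HasDerivWithinAt Λc (Λd t) (Set.Icc (0:ℝ) 1) t :=
      (hΛ t ht01).congr (fun x hx => (hΛceq x hx)) (hΛceq t ht01)
    have hΛWi : HasDerivWithinAt Λc (Λd t) (Set.Ici t) t := by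
      apply hΛW.mono_of_mem_nhdsWithin
      exact Filter.mem_of_superset (Icc_mem_nhdsGE ht1)
        (Set.Icc_subset_Icc ht01.1 le_rfl)
    have hprod : HasDerivWithinAt (fun t => (t - a) * (Λ a + Λc t) / 2)
        ((1 * (Λ a + Λc t) + (t - a) * Λd t) / 2) (Set.Ici t) t := by
      simpa using (((hasDerivAt_id t).sub_const a).hasDerivWithinAt.mul
        ((hasDerivWithinAt_const t _ (Λ a)).add hΛWi)).div_const 2
    have := ((hI t).hasDerivWithinAt.sub hprod)
    refine this.congr_deriv ?_
    rw [hΛceq t ht01]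
    ring
  have hB : ∀ x : ℝ, HasDerivAt (fun t => C * (t - a)^3 / 12) (C * (x - a)^2 / 4) x := by
    intro x
    have h1 : HasDerivAt (fun t : ℝ => t - a) 1 x := (hasDerivAt_id x).sub_const a
    have := ((h1.pow 3).const_mul C).div_const 12
    refine this.congr_deriv ?_
    push_cast
    ring
  have hbound : ∀ t ∈ Set.Ico a b,
      ‖(Λ t - Λ a - (t - a) * Λd t) / 2‖ ≤ C * (t - a)^2 / 4 := by
    intro t htmem
    have := taylor1 Λ Λd Λdd C hΛ hΛd hC ha htmem.1 (le_trans htmem.2.le hb)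
    rw [Real.norm_eq_abs, abs_div]
    rw [abs_of_nonneg (by norm_num : (0:ℝ) ≤ 2)]
    linarith
  have key := image_norm_le_of_norm_deriv_right_le_deriv_boundary hEcont hE'
    (by simp [hEa]) hB hbound (x := b) ⟨hab, le_rfl⟩
  have hEb : E b = (∫ s in a..b, Λ s) - (b - a) * (Λ a + Λ b) / 2 := by
    have hcg : (∫ s in a..b, Λc s) = ∫ s in a..b, Λ s := by
      apply intervalIntegral.integral_congr
      intro s hs
      rw [Set.uIcc_of_le hab] at hs
      exact hΛceq s ⟨le_trans ha hs.1, le_trans hs.2 hb⟩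
    simp only [hE]
    rw [hcg, hΛceq b ⟨le_trans ha hab, hb⟩]
  rw [hEb] at key
  simpa [Real.norm_eq_abs] using key

end Trap

/-- Beta-type integral with factorial constants. -/
lemma betaInt (k : ℕ) : ∀ (j : ℕ) (p q : ℝ), p ≤ q →
    ∫ t in p..q, (t - p) ^ j * (q - t) ^ k
      = ((Nat.factorial j : ℝ) * (Nat.factorial k) / (Nat.factorial (j + k + 1)))
          * (q - p) ^ (j + k + 1) := by
  induction k with
  | zero =>
    intro j p q hpq
    simp only [pow_zero, mul_one, Nat.factorial_zero, Nat.add_zero]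
    have h1 : ∫ t in p..q, (t - p) ^ j = (q - p) ^ (j + 1) / (j + 1) := by
      have := intervalIntegral.integral_comp_sub_right (a := p) (b := q) (fun t => t ^ j) p
      rw [this, integral_pow]
      norm_num
    rw [h1, Nat.factorial_succ]
    have hne : (j:ℝ) + 1 ≠ 0 := by positivity
    push_cast
    field_simp
  | succ k ih =>
    intro j p q hpq
    have hu : ∀ x ∈ Set.uIcc p q, HasDerivAt (fun t => (q - t) ^ (k+1))
        (-((k:ℝ)+1) * (q - x) ^ k) x := by
      intro x _
      have h1 : HasDerivAt (fun t : ℝ => q - t) (-1) x := by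
        simpa using (hasDerivAt_id x).const_sub q
      have := h1.pow (k+1)
      refine this.congr_deriv ?_
      push_cast
      ring
    have hv : ∀ x ∈ Set.uIcc p q, HasDerivAt (fun t => (t - p) ^ (j+1) / ((j:ℝ)+1))
        ((x - p) ^ j) x := by
      intro x _
      have h1 : HasDerivAt (fun t : ℝ => t - p) 1 x := by
        simpa using (hasDerivAt_id x).sub_const p
      have h2 := (h1.pow (j+1)).div_const ((j:ℝ)+1)
      refine h2.congr_deriv ?_
      have hne : ((j:ℝ)+1) ≠ 0 := by positivity
      simp
      field_simp
    have hIu : IntervalIntegrable (fun x => -((k:ℝ)+1) * (q - x) ^ k) volume p q :=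
      (continuous_const.mul ((continuous_const.sub continuous_id).pow k)).intervalIntegrable p q
    have hIv : IntervalIntegrable (fun x : ℝ => (x - p) ^ j) volume p q :=
      ((continuous_id.sub continuous_const).pow j).intervalIntegrable p q
    have key := intervalIntegral.integral_mul_deriv_eq_deriv_mul hu hv hIu hIv
    have hz : ∀ m : ℕ, ((0:ℝ)) ^ (m+1) = 0 := fun m => by simp
    rw [sub_self, sub_self, hz, hz] at key
    simp only [zero_mul, mul_zero, zero_div] at key
    -- key : ∫ (q-x)^{k+1} * (x-p)^j = - ∫ (-(k+1))(q-x)^k * ((x-p)^{j+1}/(j+1))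
    have key2 : ∫ t in p..q, (t - p) ^ j * (q - t) ^ (k+1)
        = (((k:ℝ)+1)/((j:ℝ)+1)) * ∫ t in p..q, (t - p) ^ (j+1) * (q - t) ^ k := by
      rw [← intervalIntegral.integral_const_mul]
      rw [show (∫ t in p..q, (t - p) ^ j * (q - t) ^ (k+1))
          = ∫ t in p..q, (q - t) ^ (k+1) * (t - p) ^ j from
        intervalIntegral.integral_congr (fun x _ => by ring)]
      rw [key, sub_self, zero_sub, ← intervalIntegral.integral_neg]
      exact intervalIntegral.integral_congr (fun x _ => by
        have hne : ((j:ℝ)+1) ≠ 0 := by positivity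
        field_simp)
    rw [key2, ih (j+1) p q hpq]
    have hne : ((j:ℝ)+1) ≠ 0 := by positivity
    have hfacne : ((Nat.factorial (j + 1 + k + 1) : ℝ)) ≠ 0 := by
      exact_mod_cast Nat.factorial_ne_zero _
    have hexp : j + 1 + k + 1 = j + (k+1) + 1 := by omega
    rw [hexp] at *
    rw [show Nat.factorial (j+1) = (j+1) * Nat.factorial j from Nat.factorial_succ j,
        show Nat.factorial (k+1) = (k+1) * Nat.factorial k from Nat.factorial_succ k]
    push_cast
    field_simp

lemma pointwise_bound (Λ Λd Λdd : ℝ → ℝ) (C : ℝ)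
    (hΛ : ∀ u ∈ Set.Icc (0:ℝ) 1, HasDerivWithinAt Λ (Λd u) (Set.Icc (0:ℝ) 1) u)
    (hΛd : ∀ u ∈ Set.Icc (0:ℝ) 1, HasDerivWithinAt Λd (Λdd u) (Set.Icc (0:ℝ) 1) u)
    (hC : ∀ u ∈ Set.Icc (0:ℝ) 1, |Λdd u| ≤ C)
    (n : ℕ) (x : Fin n → ℝ) (hm : Monotone x) (hx : InCube n x) :
    ((∫ s in (0:ℝ)..1, Λ s) - (1/2) * ∑ i ∈ Finset.range (n+1),
        (aug n x (i+1) - aug n x i) * (Λ (aug n x i) + Λ (aug n x (i+1))))^2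
      ≤ (C/12)^2 * (∑ i ∈ Finset.range (n+1), (aug n x (i+1) - aug n x i)^3)^2 := by
  have hcont : ContinuousOn Λ (Set.Icc (0:ℝ) 1) := fun u hu => (hΛ u hu).continuousWithinAt
  have hint : ∀ k < n+1, IntervalIntegrable Λ volume (aug n x k) (aug n x (k+1)) := by
    intro k _
    apply ContinuousOn.intervalIntegrable
    apply hcont.mono
    rw [Set.uIcc_of_le (aug_le n x hm hx (by omega))]
    exact Set.Icc_subset_Icc (aug_mem n x hx k).1 (aug_mem n x hx (k+1)).2
  have htel : (∫ s in (0:ℝ)..1, Λ s)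
      = ∑ i ∈ Finset.range (n+1), ∫ t in (aug n x i)..(aug n x (i+1)), Λ t := by
    rw [intervalIntegral.sum_integral_adjacent_intervals hint, aug_zero, aug_top]
  have hdiff : (∫ s in (0:ℝ)..1, Λ s) - (1/2) * ∑ i ∈ Finset.range (n+1),
        (aug n x (i+1) - aug n x i) * (Λ (aug n x i) + Λ (aug n x (i+1)))
      = ∑ i ∈ Finset.range (n+1), ((∫ t in (aug n x i)..(aug n x (i+1)), Λ t)
          - (aug n x (i+1) - aug n x i) * (Λ (aug n x i) + Λ (aug n x (i+1))) / 2) := by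
    rw [htel, Finset.mul_sum, ← Finset.sum_sub_distrib]
    exact Finset.sum_congr rfl fun i _ => by ring
  have habs : |(∫ s in (0:ℝ)..1, Λ s) - (1/2) * ∑ i ∈ Finset.range (n+1),
        (aug n x (i+1) - aug n x i) * (Λ (aug n x i) + Λ (aug n x (i+1)))|
      ≤ (C/12) * ∑ i ∈ Finset.range (n+1), (aug n x (i+1) - aug n x i)^3 := by
    rw [hdiff]
    refine le_trans (Finset.abs_sum_le_sum_abs _ _) ?_
    rw [Finset.mul_sum]
    apply Finset.sum_le_sum
    intro i hi
    have hi' : i ≤ n := Nat.lt_succ_iff.mp (Finset.mem_range.mp hi)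
    have := trap_bound Λ Λd Λdd C hΛ hΛd hC (aug_mem n x hx i).1
      (aug_le n x hm hx hi') (aug_mem n x hx (i+1)).2
    calc |(∫ t in (aug n x i)..(aug n x (i+1)), Λ t)
          - (aug n x (i+1) - aug n x i) * (Λ (aug n x i) + Λ (aug n x (i+1))) / 2|
        ≤ C * (aug n x (i+1) - aug n x i)^3 / 12 := this
      _ = C / 12 * (aug n x (i+1) - aug n x i)^3 := by ring
  have h0 : (0:ℝ) ≤ (C/12) * ∑ i ∈ Finset.range (n+1), (aug n x (i+1) - aug n x i)^3 :=
    le_trans (abs_nonneg _) habs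
  calc ((∫ s in (0:ℝ)..1, Λ s) - (1/2) * ∑ i ∈ Finset.range (n+1),
        (aug n x (i+1) - aug n x i) * (Λ (aug n x i) + Λ (aug n x (i+1))))^2
      = |(∫ s in (0:ℝ)..1, Λ s) - (1/2) * ∑ i ∈ Finset.range (n+1),
        (aug n x (i+1) - aug n x i) * (Λ (aug n x i) + Λ (aug n x (i+1)))|^2 := (sq_abs _).symm
    _ ≤ ((C/12) * ∑ i ∈ Finset.range (n+1), (aug n x (i+1) - aug n x i)^3)^2 :=
        pow_le_pow_left₀ (abs_nonneg _) habs 2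
    _ = (C/12)^2 * (∑ i ∈ Finset.range (n+1), (aug n x (i+1) - aug n x i)^3)^2 := by
        rw [mul_pow]

lemma abs_gap_le_one (n : ℕ) (x : Fin n → ℝ) (hx : InCube n x) (i : ℕ) :
    |aug n x (i+1) - aug n x i| ≤ 1 := by
  have h1 := aug_mem n x hx (i+1)
  have h2 := aug_mem n x hx i
  rw [abs_sub_le_iff]
  constructor <;> linarith [h1.1, h1.2, h2.1, h2.2]

lemma abs_Pgap_le_one (n : ℕ) (a : ℕ → ℕ) (x : Fin n → ℝ) (hx : InCube n x) :
    |Pgap n a x| ≤ 1 := by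
  unfold Pgap
  rw [Finset.abs_prod]
  apply Finset.prod_le_one (fun i _ => abs_nonneg _)
  intro i _
  rw [abs_pow]
  exact pow_le_one₀ (abs_nonneg _) (abs_gap_le_one n x hx i)

lemma Pgap_snoc (n : ℕ) (a : ℕ → ℕ) (y : Fin n → ℝ) (t : ℝ) :
    Pgap (n+1) a (Fin.snoc y t)
      = (∏ i ∈ Finset.range n, (aug n y (i+1) - aug n y i) ^ (a i))
          * (t - aug n y n) ^ (a n) * (1 - t) ^ (a (n+1)) := by
  unfold Pgap
  rw [Finset.prod_range_succ, Finset.prod_range_succ]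
  congr 2
  · apply Finset.prod_congr rfl
    intro i hi
    have hi' : i < n := Finset.mem_range.mp hi
    rw [aug_snoc n y t (by omega : i + 1 ≤ n), aug_snoc n y t (by omega : i ≤ n)]
  · rw [aug_snoc_top, aug_snoc n y t (le_rfl)]
  · rw [aug_top, aug_snoc_top]

lemma Pgap_split (n : ℕ) (a : ℕ → ℕ) (y : Fin n → ℝ) :
    Pgap n a y = (∏ i ∈ Finset.range n, (aug n y (i+1) - aug n y i) ^ (a i))
        * (1 - aug n y n) ^ (a n) := by
  unfold Pgap
  rw [Finset.prod_range_succ, aug_top]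

lemma betaIccInt (j k : ℕ) (c : ℝ) (hc0 : 0 ≤ c) (hc1 : c ≤ 1) :
    ∫ t in Set.Icc (0:ℝ) 1, Set.indicator (Set.Ici c) (fun t => (t - c)^j * (1-t)^k) t
      = ((Nat.factorial j : ℝ) * (Nat.factorial k) / (Nat.factorial (j + k + 1)))
          * (1-c) ^ (j + k + 1) := by
  rw [← MeasureTheory.integral_indicator measurableSet_Icc]
  rw [Set.indicator_indicator]
  have hset : Set.Icc (0:ℝ) 1 ∩ Set.Ici c = Set.Icc c 1 := by
    ext t
    simp only [Set.mem_inter_iff, Set.mem_Icc, Set.mem_Ici]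
    constructor
    · rintro ⟨⟨_, h2⟩, h3⟩; exact ⟨h3, h2⟩
    · rintro ⟨h1, h2⟩; exact ⟨⟨le_trans hc0 h1, h2⟩, h1⟩
  rw [hset, MeasureTheory.integral_indicator measurableSet_Icc,
    MeasureTheory.integral_Icc_eq_integral_Ioc,
    ← intervalIntegral.integral_of_le hc1]
  exact betaInt k j c 1 hc1

lemma inner_step (n : ℕ) (a : ℕ → ℕ) (y : Fin n → ℝ) (hy : InCube n y) :
    ∫ t, (if Monotone (Fin.snoc y t : Fin (n+1) → ℝ) then Pgap (n+1) a (Fin.snoc y t) else 0)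
        ∂(volume.restrict (Set.Icc (0:ℝ) 1))
      = (((a n).factorial : ℝ) * ((a (n+1)).factorial)
            / ((a n + a (n+1) + 1).factorial : ℝ))
          * (if Monotone y
              then Pgap n (fun i => if i = n then a n + a (n+1) + 1 else a i) y else 0) := by
  set c := aug n y n with hc
  have hcmem : c ∈ Set.Icc (0:ℝ) 1 := aug_mem n y hy n
  set Q : ℝ := ∏ i ∈ Finset.range n, (aug n y (i+1) - aug n y i) ^ (a i) with hQ
  have heach : ∀ t ∈ Set.Icc (0:ℝ) 1,
      (if Monotone (Fin.snoc y t : Fin (n+1) → ℝ) then Pgap (n+1) a (Fin.snoc y t) else 0)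
        = (if Monotone y
            then Set.indicator (Set.Ici c) (fun t => Q * ((t - c)^(a n) * (1-t)^(a (n+1)))) t
            else 0) := by
    intro t ht
    rw [if_congr (monotone_snoc_iff n y t ht) rfl rfl]
    by_cases hMy : Monotone y
    · simp only [hMy, true_and, if_pos]
      by_cases hct : c ≤ t
      · rw [if_pos hct, Set.indicator_of_mem (Set.mem_Ici.mpr hct), Pgap_snoc]
        rw [← hc, ← hQ]
        ring
      · rw [if_neg hct, Set.indicator_of_notMem (by simpa using hct)]
    · simp only [hMy, false_and, if_false]
  have hre : (∫ t, (if Monotone (Fin.snoc y t : Fin (n+1) → ℝ)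
        then Pgap (n+1) a (Fin.snoc y t) else 0) ∂(volume.restrict (Set.Icc (0:ℝ) 1)))
      = ∫ t in Set.Icc (0:ℝ) 1, (if Monotone y
            then Set.indicator (Set.Ici c) (fun t => Q * ((t - c)^(a n) * (1-t)^(a (n+1)))) t
            else 0) := by
    exact MeasureTheory.setIntegral_congr_fun measurableSet_Icc heach
  rw [hre]
  by_cases hMy : Monotone y
  · simp only [if_pos hMy]
    have hind : ∀ t : ℝ, Set.indicator (Set.Ici c)
          (fun t => Q * ((t - c)^(a n) * (1-t)^(a (n+1)))) t
        = Q * Set.indicator (Set.Ici c) (fun t => (t - c)^(a n) * (1-t)^(a (n+1))) t := by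
      intro t
      rw [Set.indicator_const_mul]
    simp_rw [hind]
    rw [MeasureTheory.integral_const_mul, betaIccInt (a n) (a (n+1)) c hcmem.1 hcmem.2]
    rw [Pgap_split n (fun i => if i = n then a n + a (n+1) + 1 else a i) y]
    have hQ' : (∏ i ∈ Finset.range n,
        (aug n y (i+1) - aug n y i) ^ ((fun i => if i = n then a n + a (n+1) + 1 else a i) i)) = Q := by
      apply Finset.prod_congr rfl
      intro i hi
      have : i ≠ n := by have := Finset.mem_range.mp hi; omega
      simp only [this, if_false]
    rw [hQ']
    simp only [eq_self_iff_true, if_true]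
    rw [← hc]
    ring
  · simp only [if_neg hMy, MeasureTheory.integral_zero, mul_zero]

lemma measurable_F (n : ℕ) (a : ℕ → ℕ) :
    Measurable (fun x : Fin n → ℝ => if Monotone x then Pgap n a x else 0) :=
  Measurable.ite (measurableSet_mono n) (measurable_Pgap n a) measurable_const

lemma integrable_F (n : ℕ) (a : ℕ → ℕ) :
    Integrable (fun x : Fin n → ℝ => if Monotone x then Pgap n a x else 0) (iidUniform n) := by
  apply integrable_of_cube_bound n _ 1
    (measurable_F n a).aestronglyMeasurable
  intro x hx
  by_cases h : Monotone x
  · rw [if_pos h]; exact abs_Pgap_le_one n a x hx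
  · rw [if_neg h]; simp

lemma dirichlet (n : ℕ) : ∀ a : ℕ → ℕ,
    ∫ x, (if Monotone x then Pgap n a x else 0) ∂iidUniform n
      = (∏ i ∈ Finset.range (n+1), ((a i).factorial : ℝ))
          / ((n + ∑ i ∈ Finset.range (n+1), a i).factorial : ℝ) := by
  induction n with
  | zero =>
    intro a
    have hmono : ∀ x : Fin 0 → ℝ, Monotone x := by
      intro x i j _
      exact absurd i.isLt (by omega)
    have hval : ∀ x : Fin 0 → ℝ, (if Monotone x then Pgap 0 a x else 0) = 1 := by
      intro x
      rw [if_pos (hmono x)]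
      unfold Pgap
      rw [Finset.prod_range_one, aug_top, aug_zero]
      simp
    simp_rw [hval]
    rw [MeasureTheory.integral_const]
    simp only [measure_univ, ENNReal.toReal_one, probReal_univ, one_mul, one_smul, smul_eq_mul]
    rw [Finset.prod_range_one, Finset.sum_range_one]
    have : ((a 0).factorial : ℝ) ≠ 0 := by exact_mod_cast Nat.factorial_ne_zero (a 0)
    field_simp
    rw [Nat.zero_add]
  | succ n ih =>
    intro a
    set ν : Measure ℝ := volume.restrict (Set.Icc (0:ℝ) 1) with hν
    set F : (Fin (n+1) → ℝ) → ℝ :=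
      fun x => if Monotone x then Pgap (n+1) a x else 0 with hF
    set a' : ℕ → ℕ := fun i => if i = n then a n + a (n+1) + 1 else a i with ha'
    have hmp := measurePreserving_piFinSuccAbove
      (fun _ : Fin (n+1) => volume.restrict (Set.Icc (0:ℝ) 1)) (Fin.last n)
    set e := MeasurableEquiv.piFinSuccAbove (fun _ : Fin (n+1) => ℝ) (Fin.last n) with he
    have hmps : MeasurePreserving e.symm (ν.prod (iidUniform n)) (iidUniform (n+1)) :=
      MeasurePreserving.symm e hmp
    have hsymm_apply : ∀ (t : ℝ) (y : Fin n → ℝ), e.symm (t, y) = Fin.snoc y t := by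
      intro t y
      show (MeasurableEquiv.piFinSuccAbove (fun _ : Fin (n+1) => ℝ) (Fin.last n)).symm (t, y)
        = Fin.snoc y t
      rw [MeasurableEquiv.piFinSuccAbove_symm_apply]
      exact Fin.insertNth_last' t y
    have hstep1 : ∫ x, F x ∂iidUniform (n+1)
        = ∫ p : ℝ × (Fin n → ℝ), F (e.symm p) ∂(ν.prod (iidUniform n)) :=
      (hmps.integral_comp' F).symm
    have hFi : Integrable F (iidUniform (n+1)) := integrable_F (n+1) a
    have hcomp : Integrable (fun p : ℝ × (Fin n → ℝ) => F (e.symm p)) (ν.prod (iidUniform n)) := by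
      have := (hmps.integrable_comp_emb e.symm.measurableEmbedding (g := F)).mpr hFi
      exact this
    have hstep2 : ∫ p : ℝ × (Fin n → ℝ), F (e.symm p) ∂(ν.prod (iidUniform n))
        = ∫ y, (∫ t, F (e.symm (t, y)) ∂ν) ∂iidUniform n :=
      MeasureTheory.integral_prod_symm _ hcomp
    set β : ℝ := ((a n).factorial : ℝ) * ((a (n+1)).factorial)
        / ((a n + a (n+1) + 1).factorial : ℝ) with hβ
    have hstep3 : ∫ y, (∫ t, F (e.symm (t, y)) ∂ν) ∂iidUniform n
        = ∫ y, β * (if Monotone y then Pgap n a' y else 0) ∂iidUniform n := by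
      apply MeasureTheory.integral_congr_ae
      filter_upwards [ae_cube n] with y hy
      have : (∫ t, F (e.symm (t, y)) ∂ν)
          = ∫ t, (if Monotone (Fin.snoc y t : Fin (n+1) → ℝ)
              then Pgap (n+1) a (Fin.snoc y t) else 0) ∂ν := by
        congr 1
        funext t
        rw [hsymm_apply t y]
      rw [this, hν]
      exact inner_step n a y hy
    rw [hstep1, hstep2, hstep3, MeasureTheory.integral_const_mul, ih a']
    -- arithmetic
    have hprod : (∏ i ∈ Finset.range (n+1), ((a' i).factorial : ℝ))
        = (∏ i ∈ Finset.range n, ((a i).factorial : ℝ))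
            * ((a n + a (n+1) + 1).factorial : ℝ) := by
      rw [Finset.prod_range_succ]
      congr 1
      · apply Finset.prod_congr rfl
        intro i hi
        have : i ≠ n := by have := Finset.mem_range.mp hi; omega
        simp [ha', this]
      · simp [ha']
    have hsum : (∑ i ∈ Finset.range (n+1), a' i)
        = (∑ i ∈ Finset.range n, a i) + (a n + a (n+1) + 1) := by
      rw [Finset.sum_range_succ]
      congr 1
      · apply Finset.sum_congr rfl
        intro i hi
        have : i ≠ n := by have := Finset.mem_range.mp hi; omega
        simp [ha', this]
      · simp [ha']
    have hprod2 : (∏ i ∈ Finset.range (n+1+1), ((a i).factorial : ℝ))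
        = (∏ i ∈ Finset.range n, ((a i).factorial : ℝ))
            * ((a n).factorial : ℝ) * ((a (n+1)).factorial : ℝ) := by
      rw [Finset.prod_range_succ, Finset.prod_range_succ]
    have hidx : n + ((∑ i ∈ Finset.range n, a i) + (a n + a (n+1) + 1))
        = (n+1) + (∑ i ∈ Finset.range (n+1+1), a i) := by
      rw [Finset.sum_range_succ, Finset.sum_range_succ]
      omega
    rw [hprod, hsum, hprod2, hidx, hβ]
    have h1 : ((a n + a (n+1) + 1).factorial : ℝ) ≠ 0 := by
      exact_mod_cast Nat.factorial_ne_zero _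
    have h2 : (((n+1) + ∑ i ∈ Finset.range (n+1+1), a i).factorial : ℝ) ≠ 0 := by
      exact_mod_cast Nat.factorial_ne_zero _
    field_simp

lemma Pgap_pair (n : ℕ) (i j : ℕ) (x : Fin n → ℝ) (hi : i ∈ Finset.range (n+1))
    (hj : j ∈ Finset.range (n+1)) :
    Pgap n (fun k => (if k = i then 3 else 0) + (if k = j then 3 else 0)) x
      = (aug n x (i+1) - aug n x i)^3 * (aug n x (j+1) - aug n x j)^3 := by
  unfold Pgap
  have : ∀ k ∈ Finset.range (n+1),
      (aug n x (k+1) - aug n x k) ^ ((if k = i then 3 else 0) + (if k = j then 3 else 0))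
        = (if k = i then (aug n x (k+1) - aug n x k)^3 else 1)
            * (if k = j then (aug n x (k+1) - aug n x k)^3 else 1) := by
    intro k _
    rw [pow_add]
    congr 1 <;> split <;> simp
  rw [Finset.prod_congr rfl this, Finset.prod_mul_distrib,
    Finset.prod_ite_eq' (Finset.range (n+1)) i (fun k => (aug n x (k+1) - aug n x k)^3),
    Finset.prod_ite_eq' (Finset.range (n+1)) j (fun k => (aug n x (k+1) - aug n x k)^3),
    if_pos hi, if_pos hj]

lemma pair_factorial_prod (n : ℕ) (i j : ℕ) (hi : i ∈ Finset.range (n+1))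
    (hj : j ∈ Finset.range (n+1)) :
    (∏ k ∈ Finset.range (n+1),
        ((((fun k => (if k = i then 3 else 0) + (if k = j then 3 else 0)) k).factorial : ℝ)))
      = if i = j then 720 else 36 := by
  by_cases hij : i = j
  · subst hij
    rw [if_pos rfl]
    have : ∀ k ∈ Finset.range (n+1),
        ((((if k = i then 3 else 0) + (if k = i then 3 else 0)).factorial : ℕ) : ℝ)
          = if k = i then (720:ℝ) else 1 := by
      intro k _
      split <;> norm_num [Nat.factorial]
    rw [Finset.prod_congr rfl this, Finset.prod_ite_eq' (Finset.range (n+1)) i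
      (fun _ => (720:ℝ)), if_pos hi]
  · rw [if_neg hij]
    have : ∀ k ∈ Finset.range (n+1),
        ((((if k = i then 3 else 0) + (if k = j then 3 else 0)).factorial : ℕ) : ℝ)
          = (if k = i then (6:ℝ) else 1) * (if k = j then (6:ℝ) else 1) := by
      intro k _
      by_cases h1 : k = i
      · subst h1
        rw [if_pos rfl, if_neg hij, if_pos rfl, if_neg hij]
        norm_num [Nat.factorial]
      · rw [if_neg h1, if_neg h1]
        split <;> norm_num [Nat.factorial]
    rw [Finset.prod_congr rfl this, Finset.prod_mul_distrib,
      Finset.prod_ite_eq' (Finset.range (n+1)) i (fun _ => (6:ℝ)),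
      Finset.prod_ite_eq' (Finset.range (n+1)) j (fun _ => (6:ℝ)),
      if_pos hi, if_pos hj]
    norm_num

lemma pair_sum (n : ℕ) (i j : ℕ) (hi : i ∈ Finset.range (n+1)) (hj : j ∈ Finset.range (n+1)) :
    (∑ k ∈ Finset.range (n+1), ((if k = i then 3 else 0) + (if k = j then 3 else 0))) = 6 := by
  rw [Finset.sum_add_distrib,
    Finset.sum_ite_eq' (Finset.range (n+1)) i (fun _ => 3),
    Finset.sum_ite_eq' (Finset.range (n+1)) j (fun _ => 3),
    if_pos hi, if_pos hj]

lemma moment_bound (n : ℕ) :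
    ∫ x, (if Monotone x then
        (∑ i ∈ Finset.range (n+1), (aug n x (i+1) - aug n x i)^3)^2 else 0)
        ∂iidUniform n
      = ((n+1) * (36 * n + 720) : ℝ) / ((n + 6).factorial : ℝ) := by
  have hsq : ∀ x : Fin n → ℝ,
      (if Monotone x then
        (∑ i ∈ Finset.range (n+1), (aug n x (i+1) - aug n x i)^3)^2 else 0)
      = ∑ i ∈ Finset.range (n+1), ∑ j ∈ Finset.range (n+1),
          (if Monotone x then
            Pgap n (fun k => (if k = i then 3 else 0) + (if k = j then 3 else 0)) x else 0) := by
    intro x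
    by_cases h : Monotone x
    · simp only [if_pos h]
      rw [sq, Finset.sum_mul_sum]
      exact Finset.sum_congr rfl fun i hi => Finset.sum_congr rfl fun j hj =>
        (Pgap_pair n i j x hi hj).symm
    · simp only [if_neg h, Finset.sum_const_zero]
  simp_rw [hsq]
  rw [MeasureTheory.integral_finset_sum _ (fun i _ => integrable_finset_sum _
    (fun j _ => integrable_F n _))]
  have : ∀ i ∈ Finset.range (n+1), ∫ x, (∑ j ∈ Finset.range (n+1),
      (if Monotone x then
        Pgap n (fun k => (if k = i then 3 else 0) + (if k = j then 3 else 0)) x else 0))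
        ∂iidUniform n
      = ∑ j ∈ Finset.range (n+1), ((if i = j then (720:ℝ) else 36) / ((n + 6).factorial : ℝ)) := by
    intro i hi
    rw [MeasureTheory.integral_finset_sum _ (fun j _ => integrable_F n _)]
    apply Finset.sum_congr rfl
    intro j hj
    rw [dirichlet n _, pair_factorial_prod n i j hi hj, pair_sum n i j hi hj]
  rw [Finset.sum_congr rfl this]
  have hrow : ∀ i ∈ Finset.range (n+1),
      (∑ j ∈ Finset.range (n+1), ((if i = j then (720:ℝ) else 36) / ((n + 6).factorial : ℝ)))
        = ((36 * n + 720 : ℝ)) / ((n + 6).factorial : ℝ) := by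
    intro i hi
    rw [← Finset.sum_div]
    congr 1
    have : ∀ j ∈ Finset.range (n+1), (if i = j then (720:ℝ) else 36)
        = 36 + (if j = i then (684:ℝ) else 0) := by
      intro j _
      by_cases h : i = j
      · subst h; rw [if_pos rfl, if_pos rfl]; norm_num
      · rw [if_neg h, if_neg (fun hh => h hh.symm)]; norm_num
    rw [Finset.sum_congr rfl this, Finset.sum_add_distrib, Finset.sum_const,
      Finset.sum_ite_eq' (Finset.range (n+1)) i (fun _ => (684:ℝ)), if_pos hi,
      Finset.card_range]
    push_cast
    ring
  rw [Finset.sum_congr rfl hrow, Finset.sum_const, Finset.card_range]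
  push_cast
  ring

/-- if `Λ` is twice differentiable on `[0,1]` with
`|Λ''| ≤ C` there, `Z = ∫₀^1 Λ`, and `Ẑ_QIS` is the trapezoid estimator
built from the order statistics of `n` i.i.d. `Uniform(0,1)` draws, then
`E[(Z − Ẑ_QIS)²] ≤ C²(n+20)/(4(n+2)(n+3)(n+4)(n+5)(n+6))`. -/
theorem stmt10 (Λ Λd Λdd : ℝ → ℝ) (C : ℝ)
    (hΛ : ∀ u ∈ Set.Icc (0:ℝ) 1, HasDerivWithinAt Λ (Λd u) (Set.Icc (0:ℝ) 1) u)
    (hΛd : ∀ u ∈ Set.Icc (0:ℝ) 1, HasDerivWithinAt Λd (Λdd u) (Set.Icc (0:ℝ) 1) u)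
    (hC : ∀ u ∈ Set.Icc (0:ℝ) 1, |Λdd u| ≤ C)
    (n : ℕ) :
    ∫ u, ((∫ s in (0:ℝ)..1, Λ s) - qis Λ n u) ^ 2 ∂(iidUniform n)
      ≤ C ^ 2 * (n + 20)
          / (4 * (n + 2) * (n + 3) * (n + 4) * (n + 5) * (n + 6)) := by
  have hC0 : 0 ≤ C := le_trans (abs_nonneg _) (hC 0 ⟨le_rfl, zero_le_one⟩)
  set T : (Fin n → ℝ) → ℝ :=
    fun x => ∑ i ∈ Finset.range (n+1), (aug n x (i+1) - aug n x i)^3 with hT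
  set G : (Fin n → ℝ) → ℝ :=
    fun x => if Monotone x then (C/12)^2 * (T x)^2 else 0 with hG
  set g : (Fin n → ℝ) → ℝ :=
    fun u => ∑ σ : Equiv.Perm (Fin n), G (u ∘ σ) with hg
  have hGnonneg : ∀ x, 0 ≤ G x := by
    intro x
    rw [hG]
    dsimp only
    split
    · positivity
    · exact le_rfl
  have hTabs : ∀ x, InCube n x → |T x| ≤ n + 1 := by
    intro x hx
    rw [hT]
    refine le_trans (Finset.abs_sum_le_sum_abs _ _) ?_
    calc ∑ i ∈ Finset.range (n+1), |(aug n x (i+1) - aug n x i)^3|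
        ≤ ∑ i ∈ Finset.range (n+1), 1 := by
          apply Finset.sum_le_sum
          intro i _
          rw [abs_pow]
          exact pow_le_one₀ (abs_nonneg _) (abs_gap_le_one n x hx i)
      _ = n + 1 := by simp
  have hGbound : ∀ x, InCube n x → |G x| ≤ (C/12)^2 * (n+1)^2 := by
    intro x hx
    rw [hG]
    dsimp only
    split
    · rw [abs_of_nonneg (by positivity)]
      apply mul_le_mul_of_nonneg_left _ (by positivity)
      calc (T x)^2 = |T x|^2 := (sq_abs _).symm
        _ ≤ ((n:ℝ)+1)^2 := pow_le_pow_left₀ (abs_nonneg _) (hTabs x hx) 2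
    · simp; positivity
  have hmeasT : Measurable T := by
    rw [hT]
    exact Finset.measurable_sum _ fun i _ =>
      ((measurable_aug n (i+1)).sub (measurable_aug n i)).pow_const 3
  have hmeasG : Measurable G := by
    rw [hG]
    exact Measurable.ite (measurableSet_mono n)
      ((measurable_const.mul (hmeasT.pow_const 2))) measurable_const
  have hint : ∀ σ : Equiv.Perm (Fin n),
      Integrable (fun u => G (u ∘ σ)) (iidUniform n) := by
    intro σ
    apply integrable_of_cube_bound n _ ((C/12)^2 * (n+1)^2)
    · exact (hmeasG.comp
        (measurable_pi_lambda _ fun i => measurable_pi_apply (σ i))).aestronglyMeasurable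
    · intro x hx
      exact hGbound _ (fun j => hx (σ j))
  have hgint : Integrable g (iidUniform n) := by
    rw [hg]
    exact integrable_finset_sum _ fun σ _ => hint σ
  have hae : ∀ᵐ u ∂iidUniform n,
      ((∫ s in (0:ℝ)..1, Λ s) - qis Λ n u) ^ 2 ≤ g u := by
    filter_upwards [ae_cube n] with u hu
    set σ₀ := Tuple.sort u with hσ₀
    have hm : Monotone (u ∘ σ₀) := Tuple.monotone_sort u
    have hcube : InCube n (u ∘ σ₀) := fun j => hu (σ₀ j)
    have h1 : ((∫ s in (0:ℝ)..1, Λ s) - qis Λ n u) ^ 2 ≤ G (u ∘ σ₀) := by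
      rw [hG]
      dsimp only
      rw [if_pos hm, qis_eq Λ n u σ₀ hm]
      exact pointwise_bound Λ Λd Λdd C hΛ hΛd hC n (u ∘ σ₀) hm hcube
    refine le_trans h1 ?_
    rw [hg]
    exact Finset.single_le_sum (f := fun σ : Equiv.Perm (Fin n) => G (u ∘ σ))
      (fun σ _ => hGnonneg _) (Finset.mem_univ σ₀)
  have key := MeasureTheory.integral_mono_of_nonneg
    (Filter.Eventually.of_forall fun u => sq_nonneg _) hgint hae
  refine le_trans key ?_
  have hgval : ∫ u, g u ∂iidUniform n
      = (n.factorial : ℝ) * ((C/12)^2 * (((n:ℝ)+1) * (36 * n + 720) / ((n + 6).factorial : ℝ))) := by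
    rw [hg]
    rw [MeasureTheory.integral_finset_sum _ fun σ _ => hint σ]
    have : ∀ σ : Equiv.Perm (Fin n), (∫ u, G (u ∘ σ) ∂iidUniform n)
        = (C/12)^2 * (((n:ℝ)+1) * (36 * n + 720) / ((n + 6).factorial : ℝ)) := by
      intro σ
      rw [integral_comp_perm n G σ]
      have hsplit : ∀ x, G x = (C/12)^2 * (if Monotone x then (T x)^2 else 0) := by
        intro x
        rw [hG]
        dsimp only
        split <;> simp
      simp_rw [hsplit]
      rw [MeasureTheory.integral_const_mul]
      congr 1
      rw [hT]
      exact moment_bound n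
    rw [Finset.sum_congr rfl (fun σ _ => this σ), Finset.sum_const, Finset.card_univ,
      Fintype.card_perm, Fintype.card_fin, nsmul_eq_mul]
  rw [hgval]
  -- final arithmetic
  have hfact : ((n + 6).factorial : ℝ)
      = ((n:ℝ)+6) * ((n:ℝ)+5) * ((n:ℝ)+4) * ((n:ℝ)+3) * ((n:ℝ)+2) * ((n:ℝ)+1)
          * (n.factorial : ℝ) := by
    have : (n + 6).factorial
        = (n+6) * ((n+5) * ((n+4) * ((n+3) * ((n+2) * ((n+1) * n.factorial))))) := by
      rw [show n+6 = (n+5)+1 from rfl, Nat.factorial_succ,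
          show n+5 = (n+4)+1 from rfl, Nat.factorial_succ,
          show n+4 = (n+3)+1 from rfl, Nat.factorial_succ,
          show n+3 = (n+2)+1 from rfl, Nat.factorial_succ,
          show n+2 = (n+1)+1 from rfl, Nat.factorial_succ,
          Nat.factorial_succ]
    rw [this]
    push_cast
    ring
  rw [hfact]
  have h1 : (n.factorial : ℝ) ≠ 0 := by exact_mod_cast Nat.factorial_ne_zero n
  have h2 : ((n:ℝ)+1) ≠ 0 := by positivity
  have h3 : ((n:ℝ)+2) ≠ 0 := by positivity
  have h4 : ((n:ℝ)+3) ≠ 0 := by positivity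
  have h5 : ((n:ℝ)+4) ≠ 0 := by positivity
  have h6 : ((n:ℝ)+5) ≠ 0 := by positivity
  have h7 : ((n:ℝ)+6) ≠ 0 := by positivity
  apply le_of_eq
  field_simp
  ring
end

section
/- Let Λ : ℝ → ℝ be twice differentiable on [0,1] with bounded second derivative on [0,1], and set Z = ∫₀^1 Λ(s) ds. Let U₁, …, Uₙ be i.i.d. Uniform(0,1) with order statistics U₍₁₎ ≤ ⋯ ≤ U₍ₙ₎, U₍₀₎ = 0, U₍ₙ₊₁₎ = 1, and let Ẑ_QIS = (1/2)·Σ_{i=1}^{n+1} (U₍ᵢ₎ − U₍ᵢ₋₁₎)·(Λ(U₍ᵢ₋₁₎) + Λ(U₍ᵢ₎)). Then there exists a constant M (depending only on the bound on |Λ''|) such that for all n ≥ 1, E[(Z − Ẑ_QIS)²] ≤ M / n⁴. -/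
open MeasureTheory


open MeasureTheory

/-! ### min-fold helpers -/

noncomputable def lmin (l : List ℝ) : ℝ := l.foldr min 1

lemma lmin_le_one (l : List ℝ) : lmin l ≤ 1 := by
  induction l with
  | nil => simp [lmin]
  | cons a l ih => exact le_trans (min_le_right _ _) ih

lemma lmin_le_mem {l : List ℝ} {x : ℝ} (hx : x ∈ l) : lmin l ≤ x := by
  induction l with
  | nil => simp at hx
  | cons a l ih =>
    rcases List.mem_cons.1 hx with h | h
    · subst h; exact min_le_left _ _
    · exact le_trans (min_le_right _ _) (ih h)

lemma le_lmin {l : List ℝ} {x : ℝ} (h1 : x ≤ 1) (h : ∀ y ∈ l, x ≤ y) : x ≤ lmin l := by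
  induction l with
  | nil => simpa [lmin]
  | cons a l ih =>
    exact le_min (h a (List.mem_cons_self)) (ih fun y hy => h y (List.mem_cons_of_mem _ hy))

lemma lt_lmin_iff {l : List ℝ} {t : ℝ} : t < lmin l ↔ t < 1 ∧ ∀ y ∈ l, t < y := by
  induction l with
  | nil => simp [lmin]
  | cons a l ih =>
    constructor
    · intro h
      rcases lt_min_iff.1 h with ⟨h1, h2⟩
      rcases ih.1 h2 with ⟨ha, hb⟩
      refine ⟨ha, fun y hy => ?_⟩
      rcases List.mem_cons.1 hy with h' | h'
      · subst h'; exact h1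
      · exact hb y h'
    · rintro ⟨h1, h2⟩
      exact lt_min (h2 a (List.mem_cons_self))
        (ih.2 ⟨h1, fun y hy => h2 y (List.mem_cons_of_mem _ hy)⟩)

/-! ### sorted list -/

noncomputable def srt (n : ℕ) (u : Fin n → ℝ) : List ℝ :=
  (List.ofFn u).mergeSort (fun a b => a ≤ b)

lemma length_srt (n : ℕ) (u : Fin n → ℝ) : (srt n u).length = n := by
  simp [srt, List.length_mergeSort]

lemma sorted_srt (n : ℕ) (u : Fin n → ℝ) : List.Pairwise (· ≤ ·) (srt n u) :=
  List.pairwise_mergeSort' (fun a b : ℝ => a ≤ b) (List.ofFn u)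

lemma mem_srt {n : ℕ} {u : Fin n → ℝ} {x : ℝ} : x ∈ srt n u ↔ ∃ k, u k = x := by
  rw [srt, (List.mergeSort_perm (List.ofFn u) _).mem_iff, List.mem_ofFn]

lemma srt_mono {n : ℕ} (u : Fin n → ℝ) {i j : ℕ} (hij : i ≤ j) (hj : j < n) :
    (srt n u).getD i 0 ≤ (srt n u).getD j 0 := by
  have hi : i < (srt n u).length := by rw [length_srt]; omega
  have hj' : j < (srt n u).length := by rw [length_srt]; omega
  rw [List.getD_eq_getElem _ _ hi, List.getD_eq_getElem _ _ hj']
  rcases eq_or_lt_of_le hij with h | h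
  · subst h; rfl
  · exact List.pairwise_iff_getElem.1 (sorted_srt n u) i j hi hj' h

lemma srt_mem_Icc {n : ℕ} {u : Fin n → ℝ} (hu : ∀ k, u k ∈ Set.Icc (0:ℝ) 1) {i : ℕ}
    (hi : i < n) : (srt n u).getD i 0 ∈ Set.Icc (0:ℝ) 1 := by
  have hi' : i < (srt n u).length := by rw [length_srt]; omega
  rw [List.getD_eq_getElem _ _ hi']
  have : (srt n u)[i] ∈ srt n u := List.getElem_mem hi'
  rcases mem_srt.1 this with ⟨k, hk⟩
  rw [← hk]; exact hu k
noncomputable def nxt (n : ℕ) (u : Fin n → ℝ) (t : ℝ) : ℝ :=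
  lmin (List.ofFn (fun k => if t < u k then u k else 1))

noncomputable def gap (n : ℕ) (u : Fin n → ℝ) (t : ℝ) : ℝ := nxt n u t - t

noncomputable def mnu (n : ℕ) (u : Fin n → ℝ) : ℝ := lmin (List.ofFn u)

noncomputable def Bfun (n : ℕ) (u : Fin n → ℝ) : ℝ :=
  mnu n u ^ 5 + ∑ k : Fin n, gap n u (u k) ^ 5

lemma va_zero (n : ℕ) (u : Fin n → ℝ) : orderStatAug n u 0 = 0 := by simp [orderStatAug]

lemma va_top (n : ℕ) (u : Fin n → ℝ) : orderStatAug n u (n+1) = 1 := by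
  simp [orderStatAug]

lemma va_mid {n : ℕ} (u : Fin n → ℝ) {i : ℕ} (h1 : 1 ≤ i) (h2 : i ≤ n) :
    orderStatAug n u i = (srt n u).getD (i-1) 0 := by
  have e0 : i ≠ 0 := by omega
  have e1 : i ≠ n + 1 := by omega
  simp [orderStatAug, srt, e0, e1]

lemma va_mem {n : ℕ} {u : Fin n → ℝ} (hu : ∀ k, u k ∈ Set.Icc (0:ℝ) 1) {i : ℕ}
    (hi : i ≤ n + 1) : orderStatAug n u i ∈ Set.Icc (0:ℝ) 1 := by
  rcases Nat.eq_zero_or_pos i with h0 | h0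
  · subst h0; rw [va_zero]; exact ⟨le_refl _, zero_le_one⟩
  rcases eq_or_lt_of_le hi with htop | htop
  · subst htop; rw [va_top]; exact ⟨zero_le_one, le_refl _⟩
  · rw [va_mid u h0 (by omega)]
    exact srt_mem_Icc hu (by omega)

lemma va_mono {n : ℕ} {u : Fin n → ℝ} (hu : ∀ k, u k ∈ Set.Icc (0:ℝ) 1) {i : ℕ}
    (hi : i ≤ n) : orderStatAug n u i ≤ orderStatAug n u (i+1) := by
  rcases Nat.eq_zero_or_pos i with h0 | h0
  · subst h0; rw [va_zero]
    exact (va_mem hu (by omega)).1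
  rcases eq_or_lt_of_le hi with htop | htop
  · subst htop; rw [va_top]
    exact (va_mem hu (by omega)).2
  · rw [va_mid u h0 (by omega), va_mid u (by omega) (by omega)]
    have : i + 1 - 1 = i := by omega
    rw [this]
    exact srt_mono u (by omega) (by omega)

lemma va_sum (n : ℕ) (u : Fin n → ℝ) :
    ∑ i ∈ Finset.range (n+1), (orderStatAug n u (i+1) - orderStatAug n u i) = 1 := by
  rw [Finset.sum_range_sub (f := orderStatAug n u), va_zero, va_top]
  ring

lemma key1 {n : ℕ} {u : Fin n → ℝ} (hu : ∀ k, u k ∈ Set.Icc (0:ℝ) 1) {i : ℕ}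
    (h1 : 1 ≤ i) (h2 : i ≤ n) :
    orderStatAug n u (i+1) ≤ nxt n u (orderStatAug n u i) := by
  set t := orderStatAug n u i with ht
  refine le_lmin ?_ ?_
  · exact (va_mem hu (by omega)).2
  · intro y hy
    rw [List.mem_ofFn] at hy
    rcases hy with ⟨k, hk⟩
    by_cases hcase : t < u k
    · rw [← hk]; simp only [hcase, if_true]
      -- u k is an entry of srt at some position p ≥ i
      have hmem : u k ∈ srt n u := mem_srt.2 ⟨k, rfl⟩
      rcases List.mem_iff_getElem.1 hmem with ⟨p, hp, hpe⟩
      rw [length_srt] at hp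
      have hgetD : (srt n u).getD p 0 = u k := by
        rw [List.getD_eq_getElem _ _ (by rw [length_srt]; omega)]; exact hpe
      have hpge : i ≤ p := by
        by_contra hlt
        push_neg at hlt
        have : (srt n u).getD p 0 ≤ (srt n u).getD (i-1) 0 := srt_mono u (by omega) (by omega)
        rw [hgetD, ← va_mid u h1 h2] at this
        exact absurd hcase (not_lt.2 this)
      have hin : i < n := by omega
      rw [va_mid u (by omega) (by omega)]
      have : i + 1 - 1 = i := by omega
      rw [this, ← hgetD]
      exact srt_mono u hpge (by omega)
    · rw [← hk]; simp only [hcase, if_false]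
      exact (va_mem hu (by omega)).2

lemma key0 {n : ℕ} {u : Fin n → ℝ} (hu : ∀ k, u k ∈ Set.Icc (0:ℝ) 1) (hn : 1 ≤ n) :
    orderStatAug n u 1 ≤ mnu n u := by
  refine le_lmin ((va_mem hu (by omega)).2) ?_
  intro y hy
  rw [List.mem_ofFn] at hy
  rcases hy with ⟨k, hk⟩
  have hmem : u k ∈ srt n u := mem_srt.2 ⟨k, rfl⟩
  rcases List.mem_iff_getElem.1 hmem with ⟨p, hp, hpe⟩
  rw [length_srt] at hp
  have hgetD : (srt n u).getD p 0 = u k := by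
    rw [List.getD_eq_getElem _ _ (by rw [length_srt]; omega)]; exact hpe
  rw [va_mid u (le_refl 1) hn, ← hk, ← hgetD]
  exact srt_mono u (by omega) (by omega)

lemma nxt_ge {n : ℕ} {u : Fin n → ℝ} {t : ℝ} (ht : t ≤ 1) : t ≤ nxt n u t := by
  refine le_lmin ht ?_
  intro y hy
  rw [List.mem_ofFn] at hy
  rcases hy with ⟨k, hk⟩
  rw [← hk]
  by_cases hc : t < u k
  · simp [hc, le_of_lt hc]
  · simp [hc, ht]

lemma gap_nonneg {n : ℕ} {u : Fin n → ℝ} {t : ℝ} (ht : t ≤ 1) : 0 ≤ gap n u t :=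
  sub_nonneg.2 (nxt_ge ht)

lemma gap_le_one {n : ℕ} {u : Fin n → ℝ} {t : ℝ} (ht : 0 ≤ t) : gap n u t ≤ 1 := by
  have : nxt n u t ≤ 1 := lmin_le_one _
  unfold gap; linarith
section Trap

variable {Λ Λd Λdd : ℝ → ℝ} {C : ℝ}
variable (hΛ : ∀ u ∈ Set.Icc (0:ℝ) 1, HasDerivWithinAt Λ (Λd u) (Set.Icc (0:ℝ) 1) u)
variable (hΛd : ∀ u ∈ Set.Icc (0:ℝ) 1, HasDerivWithinAt Λd (Λdd u) (Set.Icc (0:ℝ) 1) u)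
variable (hC : ∀ u ∈ Set.Icc (0:ℝ) 1, |Λdd u| ≤ C)

include hΛd hC in
lemma lipschitz_Λd {x y : ℝ} (hx : x ∈ Set.Icc (0:ℝ) 1) (hy : y ∈ Set.Icc (0:ℝ) 1) :
    |Λd y - Λd x| ≤ C * |y - x| := by
  have := (convex_Icc (0:ℝ) 1).norm_image_sub_le_of_norm_hasDerivWithin_le
    (f := Λd) (f' := Λdd) (C := C) hΛd (fun z hz => by simpa using hC z hz) hx hy
  simpa using this

include hΛ hΛd hC in
lemma trap {a b : ℝ} (hab : a ≤ b) (ha : 0 ≤ a) (hb : b ≤ 1) :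
    |(∫ s in a..b, Λ s) - (b - a) * (Λ a + Λ b) / 2| ≤ C * (b - a)^3 := by
  have hC0 : 0 ≤ C := le_trans (abs_nonneg _) (hC 0 ⟨le_refl _, zero_le_one⟩)
  rcases eq_or_lt_of_le hab with rfl | hab'
  · simp [intervalIntegral.integral_same]
  have hsub : Set.Icc a b ⊆ Set.Icc (0:ℝ) 1 := Set.Icc_subset_Icc ha hb
  have hba : b - a ≠ 0 := by linarith
  set m : ℝ := (Λ b - Λ a) / (b - a) with hm
  set ℓ : ℝ → ℝ := fun s => Λ a + (s - a) * m with hℓ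
  set g : ℝ → ℝ := fun s => Λ s - ℓ s with hg
  have hamem : a ∈ Set.Icc (0:ℝ) 1 := ⟨ha, by linarith⟩
  have hbmem : b ∈ Set.Icc (0:ℝ) 1 := ⟨by linarith, hb⟩
  have hcont : ContinuousOn Λ (Set.Icc (0:ℝ) 1) := fun x hx => (hΛ x hx).continuousWithinAt
  -- derivative of ℓ
  have hℓd : ∀ x : ℝ, HasDerivAt ℓ m x := by
    intro x
    have h1 : HasDerivAt (fun s : ℝ => (s - a) * m) m x := by
      simpa using ((hasDerivAt_id x).sub_const a).mul_const m
    simpa [hℓ] using h1.const_add (Λ a)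
  -- g has derivative within Icc a b
  have hgd : ∀ x ∈ Set.Icc a b, HasDerivWithinAt g (Λd x - m) (Set.Icc a b) x := by
    intro x hx
    exact (((hΛ x (hsub hx)).mono hsub).sub ((hℓd x).hasDerivWithinAt))
  -- Rolle: ∃ c ∈ Ioo a b, Λd c = m
  have hgcont : ContinuousOn g (Set.Icc a b) := fun x hx => (hgd x hx).continuousWithinAt
  have hgab : g a = g b := by
    simp only [hg, hℓ, hm]
    field_simp
    ring
  obtain ⟨c, hc, hc0⟩ := exists_hasDerivAt_eq_zero hab' hgcont hgab (fun x hx => by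
    have hx' : x ∈ Set.Ioo (0:ℝ) 1 := ⟨lt_of_le_of_lt ha hx.1, lt_of_lt_of_le hx.2 hb⟩
    have h1 : HasDerivAt Λ (Λd x) x :=
      (hΛ x (Set.mem_Icc_of_Ioo hx')).hasDerivAt (Icc_mem_nhds hx'.1 hx'.2)
    exact h1.sub (hℓd x))
  have hcm : Λd c = m := by linarith [sub_eq_zero.1 hc0]
  have hcmem : c ∈ Set.Icc (0:ℝ) 1 := hsub (Set.mem_Icc_of_Ioo hc)
  -- bound g'
  have hg'bdd : ∀ x ∈ Set.Icc a b, ‖Λd x - m‖ ≤ C * (b - a) := by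
    intro x hx
    rw [← hcm, Real.norm_eq_abs]
    refine le_trans (lipschitz_Λd hΛd hC hcmem (hsub hx)) ?_
    have : |x - c| ≤ b - a := by
      rw [abs_le]; constructor <;> [linarith [hx.1, hc.2]; linarith [hx.2, hc.1]]
    exact mul_le_mul_of_nonneg_left this hC0
  -- bound g
  have hgbdd : ∀ x ∈ Set.Icc a b, |g x| ≤ C * (b - a) * (b - a) := by
    intro x hx
    have := (convex_Icc a b).norm_image_sub_le_of_norm_hasDerivWithin_le
      (f := g) (f' := fun x => Λd x - m) (C := C * (b - a)) hgd hg'bdd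
      (Set.left_mem_Icc.2 hab) hx
    have hga : g a = 0 := by simp [hg, hℓ]
    rw [hga, sub_zero, Real.norm_eq_abs, Real.norm_eq_abs] at this
    refine le_trans this ?_
    have : |x - a| ≤ b - a := by rw [abs_le]; constructor <;> [linarith [hx.1]; linarith [hx.2]]
    exact mul_le_mul_of_nonneg_left this (mul_nonneg hC0 (by linarith))
  -- integral of ℓ
  have hℓint : ∫ s in a..b, ℓ s = (b - a) * (Λ a + Λ b) / 2 := by
    have h1 : ∫ s in a..b, ℓ s = (∫ s in a..b, Λ a) + ∫ s in a..b, (s - a) * m := by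
      rw [← intervalIntegral.integral_add intervalIntegrable_const
        (by apply IntervalIntegrable.mul_const; exact (continuous_id.sub continuous_const).intervalIntegrable a b)]
    have h2 : ∫ s in a..b, (s - a) * m = (b - a)^2 / 2 * m := by
      rw [intervalIntegral.integral_mul_const]
      have h3 : (∫ s in a..b, (s - a)) = ∫ x in a - a..b - a, x :=
        intervalIntegral.integral_comp_sub_right (fun x => x) a
      rw [h3, integral_id]
      ring_nf
    rw [h1, h2, intervalIntegral.integral_const, hm]
    field_simp
    ring
  -- integrability
  have hΛint : IntervalIntegrable Λ volume a b := by
    have hcab : ContinuousOn Λ (Set.uIcc a b) := by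
      rw [Set.uIcc_of_le hab]; exact hcont.mono hsub
    exact hcab.intervalIntegrable
  have hℓint' : IntervalIntegrable ℓ volume a b :=
    (continuous_const.add ((continuous_id.sub continuous_const).mul continuous_const)).intervalIntegrable a b
  have hsplit : (∫ s in a..b, Λ s) - (b - a) * (Λ a + Λ b) / 2 = ∫ s in a..b, g s := by
    rw [← hℓint, ← intervalIntegral.integral_sub hΛint hℓint']
  rw [hsplit]
  have := intervalIntegral.norm_integral_le_of_norm_le_const (C := C * (b - a) * (b - a))
    (f := g) (a := a) (b := b) (fun x hx => by
      have hx' : x ∈ Set.Icc a b := by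
        rw [Set.uIoc_of_le hab] at hx
        exact ⟨le_of_lt hx.1, hx.2⟩
      simpa using hgbdd x hx')
  rw [Real.norm_eq_abs] at this
  refine le_trans this ?_
  rw [abs_of_nonneg (by linarith)]
  ring_nf
  nlinarith [sq_nonneg (b - a)]

end Trap
section Pointwise

variable {Λ Λd Λdd : ℝ → ℝ} {C : ℝ}
variable (hΛ : ∀ u ∈ Set.Icc (0:ℝ) 1, HasDerivWithinAt Λ (Λd u) (Set.Icc (0:ℝ) 1) u)
variable (hΛd : ∀ u ∈ Set.Icc (0:ℝ) 1, HasDerivWithinAt Λd (Λdd u) (Set.Icc (0:ℝ) 1) u)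
variable (hC : ∀ u ∈ Set.Icc (0:ℝ) 1, |Λdd u| ≤ C)

lemma list_sum_getD (f : ℝ → ℝ) : ∀ (l : List ℝ),
    ∑ i ∈ Finset.range l.length, f (l.getD i 0) = (l.map f).sum := by
  intro l
  induction l with
  | nil => simp
  | cons a l ih =>
    rw [List.length_cons, Finset.sum_range_succ']
    simp only [List.getD_cons_succ, List.getD_cons_zero, List.map_cons, List.sum_cons, ih]
    ring

lemma sum_pow5_le {n : ℕ} {u : Fin n → ℝ} (hu : ∀ k, u k ∈ Set.Icc (0:ℝ) 1) (hn : 1 ≤ n) :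
    ∑ i ∈ Finset.range (n+1), (orderStatAug n u (i+1) - orderStatAug n u i)^5
      ≤ Bfun n u := by
  rw [Finset.sum_range_succ']
  have h0 : (orderStatAug n u (0+1) - orderStatAug n u 0)^5 ≤ mnu n u ^ 5 := by
    rw [va_zero, sub_zero]
    exact pow_le_pow_left₀ (va_mem hu (by omega)).1 (key0 hu hn) 5
  have h1 : ∑ i ∈ Finset.range n, (orderStatAug n u (i+1+1) - orderStatAug n u (i+1))^5
      ≤ ∑ k : Fin n, gap n u (u k) ^ 5 := by
    have hle : ∀ i ∈ Finset.range n,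
        (orderStatAug n u (i+1+1) - orderStatAug n u (i+1))^5
          ≤ gap n u (orderStatAug n u (i+1)) ^ 5 := by
      intro i hi
      rw [Finset.mem_range] at hi
      refine pow_le_pow_left₀ (sub_nonneg.2 (va_mono hu (by omega))) ?_ 5
      have := key1 hu (i := i+1) (by omega) (by omega)
      unfold gap
      linarith
    refine le_trans (Finset.sum_le_sum hle) (le_of_eq ?_)
    -- reindex through the sorted list
    have hrw : ∀ i ∈ Finset.range n,
        gap n u (orderStatAug n u (i+1)) ^ 5 = (fun t => gap n u t ^ 5) ((srt n u).getD i 0) := by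
      intro i hi
      rw [Finset.mem_range] at hi
      rw [va_mid u (by omega) (by omega)]
      simp
    rw [Finset.sum_congr rfl hrw]
    have hlen : n = (srt n u).length := (length_srt n u).symm
    rw [show (Finset.range n) = Finset.range (srt n u).length from by rw [length_srt]]
    rw [list_sum_getD (fun t => gap n u t ^ 5) (srt n u)]
    rw [srt, (((List.mergeSort_perm (List.ofFn u) (fun a b => a ≤ b))).map (fun t => gap n u t ^ 5)).sum_eq]
    rw [List.map_ofFn, List.sum_ofFn]
    rfl
  calc ∑ i ∈ Finset.range n, (orderStatAug n u (i+1+1) - orderStatAug n u (i+1))^5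
        + (orderStatAug n u (0+1) - orderStatAug n u 0)^5
      ≤ (∑ k : Fin n, gap n u (u k) ^ 5) + mnu n u ^ 5 := add_le_add h1 h0
    _ = Bfun n u := by rw [Bfun]; ring

include hΛ hΛd hC in
lemma pointwise_bound_s11 {n : ℕ} {u : Fin n → ℝ} (hu : ∀ k, u k ∈ Set.Icc (0:ℝ) 1) (hn : 1 ≤ n) :
    ((∫ s in (0:ℝ)..1, Λ s) - qis Λ n u)^2 ≤ C^2 * Bfun n u := by
  have hC0 : 0 ≤ C := le_trans (abs_nonneg _) (hC 0 ⟨le_refl _, zero_le_one⟩)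
  set v : ℕ → ℝ := orderStatAug n u with hv
  have hcont : ContinuousOn Λ (Set.Icc (0:ℝ) 1) := fun x hx => (hΛ x hx).continuousWithinAt
  have hmono : ∀ i ≤ n, v i ≤ v (i+1) := fun i hi => va_mono hu hi
  have hint : ∀ i < n + 1, IntervalIntegrable Λ volume (v i) (v (i+1)) := by
    intro i hi
    have h1 := va_mem hu (i := i) (by omega)
    have h2 := va_mem hu (i := i+1) (by omega)
    have : ContinuousOn Λ (Set.uIcc (v i) (v (i+1))) := by
      rw [Set.uIcc_of_le (hmono i (by omega))]
      exact hcont.mono (Set.Icc_subset_Icc h1.1 h2.2)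
    exact this.intervalIntegrable
  have hZ : (∫ s in (0:ℝ)..1, Λ s)
      = ∑ i ∈ Finset.range (n+1), ∫ s in (v i)..(v (i+1)), Λ s := by
    rw [intervalIntegral.sum_integral_adjacent_intervals hint]
    rw [hv, va_zero, va_top]
  have hq : qis Λ n u = ∑ i ∈ Finset.range (n+1), (v (i+1) - v i) * (Λ (v i) + Λ (v (i+1))) / 2 := by
    rw [qis, Finset.mul_sum]
    exact Finset.sum_congr rfl fun i _ => by ring
  have hdiff : (∫ s in (0:ℝ)..1, Λ s) - qis Λ n u
      = ∑ i ∈ Finset.range (n+1),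
          ((∫ s in (v i)..(v (i+1)), Λ s) - (v (i+1) - v i) * (Λ (v i) + Λ (v (i+1))) / 2) := by
    rw [hZ, hq, Finset.sum_sub_distrib]
  have habs : |(∫ s in (0:ℝ)..1, Λ s) - qis Λ n u|
      ≤ ∑ i ∈ Finset.range (n+1), C * (v (i+1) - v i)^3 := by
    rw [hdiff]
    refine le_trans (Finset.abs_sum_le_sum_abs _ _) (Finset.sum_le_sum fun i hi => ?_)
    rw [Finset.mem_range] at hi
    have h1 := va_mem hu (i := i) (by omega)
    have h2 := va_mem hu (i := i+1) (by omega)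
    exact trap hΛ hΛd hC (hmono i (by omega)) h1.1 h2.2
  -- Cauchy-Schwarz
  have hCS : (∑ i ∈ Finset.range (n+1), (v (i+1) - v i)^3)^2
      ≤ ∑ i ∈ Finset.range (n+1), (v (i+1) - v i)^5 := by
    have hnn : ∀ i ∈ Finset.range (n+1), 0 ≤ v (i+1) - v i := by
      intro i hi
      rw [Finset.mem_range] at hi
      exact sub_nonneg.2 (hmono i (by omega))
    have hcs := Finset.sum_mul_sq_le_sq_mul_sq (Finset.range (n+1))
      (fun i => Real.sqrt (v (i+1) - v i)) (fun i => Real.sqrt (v (i+1) - v i) * (v (i+1) - v i)^2)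
    have e1 : ∀ i ∈ Finset.range (n+1),
        Real.sqrt (v (i+1) - v i) * (Real.sqrt (v (i+1) - v i) * (v (i+1) - v i)^2)
          = (v (i+1) - v i)^3 := by
      intro i hi
      rw [← mul_assoc, Real.mul_self_sqrt (hnn i hi)]
      ring
    have e2 : ∀ i ∈ Finset.range (n+1),
        Real.sqrt (v (i+1) - v i) ^ 2 = v (i+1) - v i := fun i hi => Real.sq_sqrt (hnn i hi)
    have e3 : ∀ i ∈ Finset.range (n+1),
        (Real.sqrt (v (i+1) - v i) * (v (i+1) - v i)^2) ^ 2 = (v (i+1) - v i)^5 := by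
      intro i hi
      rw [mul_pow, Real.sq_sqrt (hnn i hi)]
      ring
    rw [Finset.sum_congr rfl e1, Finset.sum_congr rfl e2, Finset.sum_congr rfl e3] at hcs
    rw [va_sum n u] at hcs
    simpa using hcs
  have hsum5 := sum_pow5_le hu hn
  have habs2 : ((∫ s in (0:ℝ)..1, Λ s) - qis Λ n u)^2
      ≤ (C * ∑ i ∈ Finset.range (n+1), (v (i+1) - v i)^3)^2 := by
    rw [← Finset.mul_sum] at habs
    rw [← sq_abs]
    have h0 : (0:ℝ) ≤ |(∫ s in (0:ℝ)..1, Λ s) - qis Λ n u| := abs_nonneg _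
    exact pow_le_pow_left₀ h0 habs 2
  refine le_trans habs2 ?_
  rw [mul_pow]
  refine mul_le_mul_of_nonneg_left (le_trans hCS hsum5) (by positivity)

end Pointwise
instance : IsProbabilityMeasure (volume.restrict (Set.Icc (0:ℝ) 1)) := by
  constructor
  rw [Measure.restrict_apply_univ, Real.volume_Icc]
  norm_num

instance inst_s11 (n : ℕ) : IsProbabilityMeasure (iidUniform n) := by
  unfold iidUniform; infer_instance

lemma ae_mem_Icc (n : ℕ) : ∀ᵐ u ∂(iidUniform n), ∀ k, u k ∈ Set.Icc (0:ℝ) 1 := by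
  rw [ae_all_iff]
  intro k
  rw [ae_iff]
  have hset : {u : Fin n → ℝ | ¬ u k ∈ Set.Icc (0:ℝ) 1}
      = Set.pi Set.univ (fun j => if j = k then (Set.Icc (0:ℝ) 1)ᶜ else Set.univ) := by
    ext u
    simp only [Set.mem_setOf_eq, Set.mem_univ_pi]
    constructor
    · intro h j
      by_cases hj : j = k
      · subst hj; simp [h]
      · simp [hj]
    · intro h
      have := h k
      simpa using this
  rw [hset, iidUniform, Measure.pi_pi]
  apply Finset.prod_eq_zero (Finset.mem_univ k)
  rw [if_pos rfl, Measure.restrict_apply (measurableSet_Icc.compl)]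
  simp

lemma meas_lmin_ofFn {α : Type*} [MeasurableSpace α] :
    ∀ {m : ℕ} (c : Fin m → α → ℝ), (∀ k, Measurable (c k)) →
      Measurable fun a => lmin (List.ofFn fun k => c k a) := by
  intro m
  induction m with
  | zero => intro c _; simp only [List.ofFn_zero]; exact measurable_const
  | succ m ih =>
    intro c hc
    have : (fun a => lmin (List.ofFn fun k => c k a))
        = fun a => min (c 0 a) (lmin (List.ofFn fun k : Fin m => c k.succ a)) := by
      funext a
      rw [List.ofFn_succ]
      rfl
    rw [this]
    exact (hc 0).min (ih (fun k => c k.succ) (fun k => hc k.succ))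

lemma meas_mnu (n : ℕ) : Measurable fun u : Fin n → ℝ => mnu n u := by
  unfold mnu
  exact meas_lmin_ofFn (fun (k : Fin n) (u : Fin n → ℝ) => u k) (fun k => measurable_pi_apply k)

lemma meas_gap (n : ℕ) (k : Fin n) : Measurable fun u : Fin n → ℝ => gap n u (u k) := by
  unfold gap nxt
  apply Measurable.sub
  · apply meas_lmin_ofFn (fun (j : Fin n) (u : Fin n → ℝ) => if u k < u j then u j else 1)
    intro j
    exact Measurable.ite (measurableSet_lt (measurable_pi_apply k) (measurable_pi_apply j))
      (measurable_pi_apply j) measurable_const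
  · exact measurable_pi_apply k
section Beta

lemma beta_base (m : ℕ) : ∫ s in (0:ℝ)..1, (1-s)^m = 1/(m+1) := by
  rw [show (∫ s in (0:ℝ)..1, (1-s)^m) = ∫ s in (0:ℝ)..1, (fun x => x^m) (1 - s) from rfl]
  rw [intervalIntegral.integral_comp_sub_left (fun x => x^m) 1]
  norm_num [integral_pow]

lemma beta_step (k m : ℕ) : ∫ s in (0:ℝ)..1, s^(k+1) * (1-s)^m
    = ((k+1 : ℝ)/(m+1)) * ∫ s in (0:ℝ)..1, s^k * (1-s)^(m+1) := by
  have hm1 : ((m:ℝ)+1) ≠ 0 := by positivity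
  have hu : ∀ x ∈ Set.uIcc (0:ℝ) 1, HasDerivAt (fun s : ℝ => s^(k+1)) (((k:ℝ)+1) * x^k) x := by
    intro x _
    simpa using hasDerivAt_pow (k+1) x
  have hv : ∀ x ∈ Set.uIcc (0:ℝ) 1,
      HasDerivAt (fun s : ℝ => -(1-s)^(m+1)/((m:ℝ)+1)) ((1-x)^m) x := by
    intro x _
    have h1 : HasDerivAt (fun s : ℝ => (1-s)^(m+1)) (-(((m:ℝ)+1) * (1-x)^m)) x := by
      have h2 : HasDerivAt (fun s : ℝ => 1 - s) (-1) x := by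
        exact (hasDerivAt_id' x).const_sub (1:ℝ)
      have h3 := (hasDerivAt_pow (m+1) (1-x)).comp x h2
      simp only [Function.comp_def] at h3
      exact h3.congr_deriv (by simp only [Nat.add_sub_cancel, Nat.cast_add, Nat.cast_one]; ring)
    have h4 := (h1.neg).div_const ((m:ℝ)+1)
    have : -(-(((m:ℝ)+1) * (1-x)^m)) / ((m:ℝ)+1) = (1-x)^m := by field_simp
    rwa [this] at h4
  have hu'int : IntervalIntegrable (fun x : ℝ => ((k:ℝ)+1) * x^k) volume 0 1 :=
    (Continuous.intervalIntegrable (by continuity) _ _)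
  have hv'int : IntervalIntegrable (fun x : ℝ => (1-x)^m) volume 0 1 :=
    (Continuous.intervalIntegrable (by continuity) _ _)
  have hparts := intervalIntegral.integral_mul_deriv_eq_deriv_mul hu hv hu'int hv'int
  rw [hparts]
  have e1 : (1:ℝ)^(k+1) * (-(1-(1:ℝ))^(m+1)/((m:ℝ)+1)) = 0 := by norm_num
  have e2 : (0:ℝ)^(k+1) * (-(1-(0:ℝ))^(m+1)/((m:ℝ)+1)) = 0 := by
    rw [zero_pow (Nat.succ_ne_zero k)]; ring
  rw [e1, e2]
  have e3 : ∀ x : ℝ, ((k:ℝ)+1) * x^k * (-(1-x)^(m+1)/((m:ℝ)+1))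
      = -((((k:ℝ)+1)/((m:ℝ)+1)) * (x^k * (1-x)^(m+1))) := by
    intro x; ring
  rw [intervalIntegral.integral_congr (g := fun x =>
      -((((k:ℝ)+1)/((m:ℝ)+1)) * (x^k * (1-x)^(m+1)))) (fun x _ => e3 x)]
  rw [intervalIntegral.integral_neg, intervalIntegral.integral_const_mul]
  push_cast
  ring

lemma beta4 (m : ℕ) : ∫ s in (0:ℝ)..1, s^4 * (1-s)^m
    = 24 / (((m:ℝ)+1)*((m:ℝ)+2)*((m:ℝ)+3)*((m:ℝ)+4)*((m:ℝ)+5)) := by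
  have h0 : ∀ m' : ℕ, (∫ s in (0:ℝ)..1, s^0 * (1-s)^m') = 1/((m':ℝ)+1) := by
    intro m'
    simp only [pow_zero, one_mul]
    exact beta_base m'
  have e1 := beta_step 3 m
  have e2 := beta_step 2 (m+1)
  have e3 := beta_step 1 (m+2)
  have e4 := beta_step 0 (m+3)
  rw [show (3+1) = 4 from rfl] at e1
  rw [show (2+1) = 3 from rfl] at e2
  rw [show (1+1) = 2 from rfl] at e3
  rw [show (0+1) = 1 from rfl] at e4
  rw [e1, e2, e3, e4, h0 (m+3+1)]
  push_cast
  have h1 : ((m:ℝ)+1) ≠ 0 := by positivity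
  have h2 : ((m:ℝ)+2) ≠ 0 := by positivity
  have h3 : ((m:ℝ)+3) ≠ 0 := by positivity
  have h4 : ((m:ℝ)+4) ≠ 0 := by positivity
  have h5 : ((m:ℝ)+5) ≠ 0 := by positivity
  field_simp
  ring

lemma beta4' (m : ℕ) : ∫ s in (0:ℝ)..1, 5 * s^4 * (1-s)^m
    = 120 / (((m:ℝ)+1)*((m:ℝ)+2)*((m:ℝ)+3)*((m:ℝ)+4)*((m:ℝ)+5)) := by
  have : ∀ s : ℝ, 5 * s^4 * (1-s)^m = 5 * (s^4 * (1-s)^m) := fun s => by ring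
  rw [intervalIntegral.integral_congr (fun s _ => this s), intervalIntegral.integral_const_mul,
    beta4]
  ring

end Beta
section Moment

open Set

lemma moment5 {Ω : Type*} [MeasurableSpace Ω] (μ : Measure Ω) [IsProbabilityMeasure μ]
    (X : Ω → ℝ) (hX : Measurable X) (h01 : ∀ᵐ ω ∂μ, X ω ∈ Set.Icc (0:ℝ) 1) (m : ℕ)
    (hs : ∀ s ∈ Set.Ioo (0:ℝ) 1, μ {ω | s < X ω} ≤ ENNReal.ofReal ((1-s)^m)) :
    ∫ ω, X ω ^ 5 ∂μ ≤ 120 / (((m:ℝ)+1)*((m:ℝ)+2)*((m:ℝ)+3)*((m:ℝ)+4)*((m:ℝ)+5)) := by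
  set ν : Measure ℝ := volume.restrict (Set.Ioc (0:ℝ) 1) with hν
  have hνprob : IsProbabilityMeasure ν := by
    constructor; rw [hν, Measure.restrict_apply_univ, Real.volume_Ioc]; norm_num
  set F : Ω → ℝ → ℝ := fun ω s => if s < X ω then 5 * s^4 else 0 with hF
  have hSmeas : MeasurableSet {p : Ω × ℝ | p.2 < X p.1} :=
    measurableSet_lt measurable_snd (hX.comp measurable_fst)
  have hFmeas : Measurable (Function.uncurry F) := by
    have : Function.uncurry F = fun p : Ω × ℝ => if p.2 < X p.1 then 5 * p.2^4 else 0 := rfl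
    rw [this]
    exact Measurable.ite hSmeas (by fun_prop) measurable_const
  have hFint : Integrable (Function.uncurry F) (μ.prod ν) := by
    refine Integrable.mono' (integrable_const 5) hFmeas.aestronglyMeasurable ?_
    have hae : ∀ᵐ p : Ω × ℝ ∂(μ.prod ν), p.2 ∈ Set.Ioc (0:ℝ) 1 := by
      rw [ae_iff]
      have : {p : Ω × ℝ | ¬ p.2 ∈ Set.Ioc (0:ℝ) 1} = Set.univ ×ˢ (Set.Ioc (0:ℝ) 1)ᶜ := by
        ext p; simp
      rw [this, Measure.prod_prod, hν, Measure.restrict_apply measurableSet_Ioc.compl]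
      simp
    filter_upwards [hae] with p hp
    have h4 : |p.2| ≤ 1 := by rw [abs_le]; constructor <;> [linarith [hp.1]; linarith [hp.2]]
    have : |Function.uncurry F p| ≤ 5 * |p.2|^4 := by
      rw [Function.uncurry]
      by_cases h : p.2 < X p.1
      · simp only [hF, h, if_true]
        rw [abs_mul, abs_pow]
        simp [abs_of_nonneg]
      · simp only [hF, h, if_false, abs_zero]
        positivity
    rw [Real.norm_eq_abs]
    refine le_trans this ?_
    nlinarith [abs_nonneg p.2, pow_le_one₀ (abs_nonneg p.2) h4 (n := 4)]
  -- inner identity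
  have hinner : ∀ᵐ ω ∂μ, ∫ s, F ω s ∂ν = X ω ^ 5 := by
    filter_upwards [h01] with ω hω
    have : ∀ s : ℝ, F ω s = Set.indicator (Set.Iio (X ω)) (fun s => 5 * s^4) s := by
      intro s
      by_cases h : s < X ω <;> simp [hF, h, Set.indicator_of_mem, Set.mem_Iio]
    rw [integral_congr_ae (Filter.Eventually.of_forall this)]
    rw [hν, integral_indicator measurableSet_Iio]
    have hset : Set.Iio (X ω) ∩ Set.Ioc (0:ℝ) 1 = Set.Ioo 0 (X ω) := by
      ext s
      simp only [Set.mem_inter_iff, Set.mem_Iio, Set.mem_Ioc, Set.mem_Ioo]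
      constructor
      · rintro ⟨h1, h2, h3⟩; exact ⟨h2, h1⟩
      · rintro ⟨h1, h2⟩; exact ⟨h2, h1, le_trans (le_of_lt h2) hω.2⟩
    rw [Measure.restrict_restrict measurableSet_Iio, hset]
    rw [← integral_Ioc_eq_integral_Ioo, ← intervalIntegral.integral_of_le hω.1]
    have : ∫ s in (0:ℝ)..(X ω), 5 * s^4 = X ω ^ 5 := by
      rw [intervalIntegral.integral_const_mul, integral_pow]
      norm_num
      ring
    rw [this]
  have hswap : ∫ ω, X ω ^ 5 ∂μ = ∫ s, (∫ ω, F ω s ∂μ) ∂ν := by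
    rw [← integral_integral_swap hFint, integral_congr_ae hinner]
  rw [hswap]
  -- outer: ∫ ω F = 5 s^4 * μ{X > s}
  have houter : ∀ s : ℝ, ∫ ω, F ω s ∂μ = (μ {ω | s < X ω}).toReal * (5 * s^4) := by
    intro s
    have : ∀ ω, F ω s = Set.indicator {ω | s < X ω} (fun _ => 5 * s^4) ω := by
      intro ω
      by_cases h : s < X ω <;> simp [hF, h, Set.indicator_of_mem, Set.mem_setOf_eq]
    rw [integral_congr_ae (Filter.Eventually.of_forall this)]
    rw [integral_indicator_const (5 * s^4) (measurableSet_lt measurable_const hX)]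
    simp [smul_eq_mul]
    left; rfl
  have hXle : μ {ω | 1 < X ω} = 0 := by
    rw [← le_zero_iff]
    refine le_trans (measure_mono ?_) (le_of_eq (ae_iff.1 h01))
    intro ω hω
    simp only [Set.mem_setOf_eq] at hω ⊢
    intro hc
    linarith [hc.2]
  have hmono : ∫ s, (∫ ω, F ω s ∂μ) ∂ν ≤ ∫ s in Set.Ioc (0:ℝ) 1, 5 * s^4 * (1-s)^m := by
    refine integral_mono_of_nonneg ?_ ?_ ?_
    · refine Filter.Eventually.of_forall fun s => ?_
      show (0:ℝ) ≤ ∫ ω, F ω s ∂μ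
      rw [houter]
      positivity
    · exact (Continuous.integrableOn_Ioc (by continuity))
    · rw [hν]
      refine (ae_restrict_mem measurableSet_Ioc).mono fun s hsIoc => ?_
      show ∫ ω, F ω s ∂μ ≤ 5 * s^4 * (1-s)^m
      rw [houter]
      rcases eq_or_lt_of_le hsIoc.2 with h1 | h1
      · -- s = 1
        have : μ {ω | s < X ω} = 0 := by
          rw [h1]; exact hXle
        rw [this]
        simp only [ENNReal.toReal_zero, zero_mul]
        exact mul_nonneg (by positivity) (pow_nonneg (by linarith) m)
      · have hb := hs s ⟨hsIoc.1, h1⟩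
        have hto : (μ {ω | s < X ω}).toReal ≤ (1-s)^m := by
          rw [← ENNReal.ofReal_toReal (measure_ne_top μ _)] at hb
          have := ENNReal.toReal_mono (by finiteness) hb
          rwa [ENNReal.toReal_ofReal (pow_nonneg (by linarith) m),
            ENNReal.toReal_ofReal ENNReal.toReal_nonneg] at this
        have hs4 : (0:ℝ) ≤ 5 * s^4 := by positivity
        calc (μ {ω | s < X ω}).toReal * (5 * s^4) ≤ (1-s)^m * (5 * s^4) :=
              mul_le_mul_of_nonneg_right hto hs4
          _ = 5 * s^4 * (1-s)^m := by ring
  refine le_trans hmono ?_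
  rw [← intervalIntegral.integral_of_le (zero_le_one), beta4']
end Moment
section Surv

open Set

lemma restrict_Icc_Ioi {s : ℝ} (hs : s ∈ Set.Ioo (0:ℝ) 1) :
    (volume.restrict (Set.Icc (0:ℝ) 1)) (Set.Ioi s) = ENNReal.ofReal (1 - s) := by
  rw [Measure.restrict_apply measurableSet_Ioi]
  have : Set.Ioi s ∩ Set.Icc (0:ℝ) 1 = Set.Ioc s 1 := by
    ext x
    simp only [Set.mem_inter_iff, Set.mem_Ioi, Set.mem_Icc, Set.mem_Ioc]
    constructor
    · rintro ⟨h1, _, h3⟩; exact ⟨h1, h3⟩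
    · rintro ⟨h1, h2⟩; exact ⟨h1, le_of_lt (lt_trans hs.1 h1), h2⟩
  rw [this, Real.volume_Ioc]

lemma surv_mnu (n : ℕ) {s : ℝ} (hs : s ∈ Set.Ioo (0:ℝ) 1) :
    iidUniform n {u | s < mnu n u} ≤ ENNReal.ofReal ((1-s)^n) := by
  have hset : {u : Fin n → ℝ | s < mnu n u} = Set.pi Set.univ (fun _ : Fin n => Set.Ioi s) := by
    ext u
    simp only [Set.mem_setOf_eq, Set.mem_univ_pi, Set.mem_Ioi, mnu, lt_lmin_iff, List.mem_ofFn]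
    constructor
    · rintro ⟨_, h2⟩ k
      exact h2 (u k) ⟨k, rfl⟩
    · intro h
      exact ⟨hs.2, by rintro y ⟨k, rfl⟩; exact h k⟩
  rw [hset, iidUniform, Measure.pi_pi]
  rw [Finset.prod_congr rfl (fun k _ => restrict_Icc_Ioi hs)]
  rw [Finset.prod_const, Finset.card_univ, Fintype.card_fin]
  rw [← ENNReal.ofReal_pow (by linarith [hs.2])]

lemma surv_gap (m : ℕ) (k : Fin (m+1)) {s : ℝ} (hs : s ∈ Set.Ioo (0:ℝ) 1) :
    iidUniform (m+1) {u | s < gap (m+1) u (u k)} ≤ ENNReal.ofReal ((1-s)^m) := by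
  set μ₁ : Measure ℝ := volume.restrict (Set.Icc (0:ℝ) 1) with hμ₁
  set e := MeasurableEquiv.piFinSuccAbove (fun _ : Fin (m+1) => ℝ) k with he
  have hmp := measurePreserving_piFinSuccAbove (fun _ : Fin (m+1) => μ₁) k
  set B : Set (ℝ × (Fin m → ℝ)) :=
    {p | p.1 + s < 1 ∧ ∀ j, p.2 j ∉ Set.Ioc p.1 (p.1 + s)} with hB
  have hBmeas : MeasurableSet B := by
    have hBeq : B = {p : ℝ × (Fin m → ℝ) | p.1 + s < 1}
        ∩ ⋂ j, {p : ℝ × (Fin m → ℝ) | p.2 j ∈ Set.Ioc p.1 (p.1 + s)}ᶜ := by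
      ext p; simp [hB]
    rw [hBeq]
    refine MeasurableSet.inter ?_ (MeasurableSet.iInter fun j => ?_)
    · exact measurableSet_lt (measurable_fst.add_const s) measurable_const
    · refine MeasurableSet.compl ?_
      have : {p : ℝ × (Fin m → ℝ) | p.2 j ∈ Set.Ioc p.1 (p.1 + s)}
          = {p : ℝ × (Fin m → ℝ) | p.1 < p.2 j} ∩ {p | p.2 j ≤ p.1 + s} := by
        ext p; simp [Set.mem_Ioc]
      rw [this]
      have hm2 : Measurable fun p : ℝ × (Fin m → ℝ) => p.2 j := by fun_prop
      exact (measurableSet_lt measurable_fst hm2).inter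
        (measurableSet_le hm2 (measurable_fst.add_const s))
  have heval1 : ∀ u : Fin (m+1) → ℝ, (e u).1 = u k := fun u => rfl
  have heval2 : ∀ (u : Fin (m+1) → ℝ) (j : Fin m), (e u).2 j = u (k.succAbove j) :=
    fun u j => rfl
  have hAB : {u : Fin (m+1) → ℝ | s < gap (m+1) u (u k)} = e ⁻¹' B := by
    ext u
    rw [Set.mem_preimage]
    have hmemB : e u ∈ B ↔
        (u k + s < 1 ∧ ∀ j, u (k.succAbove j) ∉ Set.Ioc (u k) (u k + s)) := by
      rw [hB]
      simp only [Set.mem_setOf_eq, heval1, heval2]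
    rw [hmemB]
    have hlhs : (u ∈ {u : Fin (m+1) → ℝ | s < gap (m+1) u (u k)})
        ↔ u k + s < nxt (m+1) u (u k) := by
      simp only [Set.mem_setOf_eq]
      unfold gap; constructor <;> intro h <;> linarith
    rw [hlhs]
    unfold nxt
    rw [lt_lmin_iff]
    constructor
    · rintro ⟨h1, h2⟩
      refine ⟨h1, fun j => ?_⟩
      rintro ⟨ha, hb⟩
      have := h2 (if u k < u (k.succAbove j) then u (k.succAbove j) else 1)
        (by rw [List.mem_ofFn]; exact ⟨k.succAbove j, rfl⟩)
      rw [if_pos ha] at this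
      linarith
    · rintro ⟨h1, h2⟩
      refine ⟨h1, ?_⟩
      rintro y hy
      rw [List.mem_ofFn] at hy
      rcases hy with ⟨j, rfl⟩
      show u k + s < if u k < u j then u j else 1
      rcases eq_or_ne j k with rfl | hjk
      · rw [if_neg (lt_irrefl _)]; exact h1
      · rcases Fin.exists_succAbove_eq hjk with ⟨j', rfl⟩
        have hj' := h2 j'
        simp only [Set.mem_Ioc, not_and, not_le] at hj'
        by_cases hc : u k < u (k.succAbove j')
        · rw [if_pos hc]
          exact hj' hc
        · rw [if_neg hc]; exact h1
  rw [hAB]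
  have hpre : iidUniform (m+1) (e ⁻¹' B)
      = (μ₁.prod (Measure.pi fun _ : Fin m => μ₁)) B := by
    rw [iidUniform, ← hmp.map_eq, Measure.map_apply e.measurable hBmeas]
  rw [hpre, Measure.prod_apply hBmeas]
  have hslice : ∀ t ∈ Set.Icc (0:ℝ) 1,
      (Measure.pi fun _ : Fin m => μ₁) {w | (t, w) ∈ B} ≤ ENNReal.ofReal ((1-s)^m) := by
    intro t ht
    by_cases hts : t + s < 1
    · have : {w : Fin m → ℝ | (t, w) ∈ B}
          = Set.pi Set.univ (fun _ : Fin m => (Set.Ioc t (t + s))ᶜ) := by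
        ext w
        simp only [hB, Set.mem_setOf_eq, Set.mem_univ_pi, Set.mem_compl_iff]
        exact ⟨fun h => h.2, fun h => ⟨hts, h⟩⟩
      rw [this, Measure.pi_pi]
      have hfac : μ₁ ((Set.Ioc t (t + s))ᶜ) = ENNReal.ofReal (1 - s) := by
        rw [measure_compl measurableSet_Ioc (measure_ne_top _ _)]
        have h1 : μ₁ Set.univ = 1 := measure_univ
        have h2 : μ₁ (Set.Ioc t (t + s)) = ENNReal.ofReal s := by
          rw [hμ₁, Measure.restrict_apply measurableSet_Ioc]
          have : Set.Ioc t (t + s) ∩ Set.Icc (0:ℝ) 1 = Set.Ioc t (t + s) := by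
            refine Set.inter_eq_left.2 ?_
            intro x hx
            exact ⟨le_trans ht.1 (le_of_lt hx.1), le_trans hx.2 (by linarith)⟩
          rw [this, Real.volume_Ioc]
          norm_num
        rw [h1, h2]
        rw [← ENNReal.ofReal_one, ← ENNReal.ofReal_sub _ (le_of_lt hs.1)]
      rw [Finset.prod_congr rfl (fun j _ => hfac), Finset.prod_const, Finset.card_univ,
        Fintype.card_fin, ← ENNReal.ofReal_pow (by linarith [hs.2])]
    · have : {w : Fin m → ℝ | (t, w) ∈ B} = ∅ := by
        ext w; simp only [hB, Set.mem_setOf_eq, Set.mem_empty_iff_false, iff_false]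
        intro h; exact hts h.1
      rw [this]
      simp
  calc ∫⁻ t, (Measure.pi fun _ : Fin m => μ₁) (Prod.mk t ⁻¹' B) ∂μ₁
      ≤ ∫⁻ _, ENNReal.ofReal ((1-s)^m) ∂μ₁ := by
        refine lintegral_mono_ae ?_
        rw [hμ₁]
        refine (ae_restrict_mem measurableSet_Icc).mono fun t ht => ?_
        exact hslice t ht
    _ = ENNReal.ofReal ((1-s)^m) := by
        rw [lintegral_const]
        simp

end Surv

/-- if `Λ` is twice differentiable on `[0,1]` with bounded
second derivative there, and `Z = ∫₀^1 Λ`, then there is a constant `M`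
(depending only on the bound `C` on `|Λ''|`) such that for all `n ≥ 1`
the QIS estimator satisfies `E[(Z − Ẑ_QIS)²] ≤ M/n⁴`. -/
theorem stmt11 (Λ Λd Λdd : ℝ → ℝ) (C : ℝ)
    (hΛ : ∀ u ∈ Set.Icc (0:ℝ) 1, HasDerivWithinAt Λ (Λd u) (Set.Icc (0:ℝ) 1) u)
    (hΛd : ∀ u ∈ Set.Icc (0:ℝ) 1, HasDerivWithinAt Λd (Λdd u) (Set.Icc (0:ℝ) 1) u)
    (hC : ∀ u ∈ Set.Icc (0:ℝ) 1, |Λdd u| ≤ C) :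
    ∃ M : ℝ, ∀ n : ℕ, 1 ≤ n →
      ∫ u, ((∫ s in (0:ℝ)..1, Λ s) - qis Λ n u) ^ 2 ∂(iidUniform n)
        ≤ M / n ^ 4 := by
  have hC0 : 0 ≤ C := le_trans (abs_nonneg _) (hC 0 ⟨le_refl _, zero_le_one⟩)
  refine ⟨240 * C^2, ?_⟩
  intro n hn
  obtain ⟨m, rfl⟩ : ∃ m, n = m + 1 := ⟨n - 1, by omega⟩
  set μ := iidUniform (m+1) with hμ
  have haeIcc := ae_mem_Icc (m+1)
  have hx : (0:ℝ) ≤ (m:ℝ) := Nat.cast_nonneg m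
  -- measurability
  have hmeas_mnu5 : Measurable fun u : Fin (m+1) → ℝ => mnu (m+1) u ^ 5 :=
    (meas_mnu (m+1)).pow_const 5
  have hmeas_gap5 : ∀ k : Fin (m+1), Measurable fun u : Fin (m+1) → ℝ => gap (m+1) u (u k) ^ 5 :=
    fun k => (meas_gap (m+1) k).pow_const 5
  -- a.e. range facts
  have hae_mnu : ∀ᵐ u ∂μ, mnu (m+1) u ∈ Set.Icc (0:ℝ) 1 := by
    filter_upwards [haeIcc] with u hu
    refine ⟨le_lmin zero_le_one ?_, lmin_le_one _⟩
    intro y hy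
    rw [List.mem_ofFn] at hy
    rcases hy with ⟨k, rfl⟩
    exact (hu k).1
  have hae_gap : ∀ k : Fin (m+1), ∀ᵐ u ∂μ, gap (m+1) u (u k) ∈ Set.Icc (0:ℝ) 1 := by
    intro k
    filter_upwards [haeIcc] with u hu
    exact ⟨gap_nonneg (hu k).2, gap_le_one (hu k).1⟩
  -- integrability
  have hint_mnu : Integrable (fun u => mnu (m+1) u ^ 5) μ := by
    refine Integrable.mono' (integrable_const 1) hmeas_mnu5.aestronglyMeasurable ?_
    filter_upwards [hae_mnu] with u hu
    rw [Real.norm_eq_abs, abs_of_nonneg (pow_nonneg hu.1 5)]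
    exact pow_le_one₀ hu.1 hu.2
  have hint_gap : ∀ k : Fin (m+1), Integrable (fun u => gap (m+1) u (u k) ^ 5) μ := by
    intro k
    refine Integrable.mono' (integrable_const 1) (hmeas_gap5 k).aestronglyMeasurable ?_
    filter_upwards [hae_gap k] with u hu
    rw [Real.norm_eq_abs, abs_of_nonneg (pow_nonneg hu.1 5)]
    exact pow_le_one₀ hu.1 hu.2
  have hint_B : Integrable (fun u => C^2 * Bfun (m+1) u) μ := by
    refine Integrable.const_mul ?_ _
    exact (hint_mnu.add (integrable_finset_sum Finset.univ (fun k _ => hint_gap k)))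
  -- step 1: pointwise domination
  have hstep1 : ∫ u, ((∫ s in (0:ℝ)..1, Λ s) - qis Λ (m+1) u) ^ 2 ∂μ
      ≤ ∫ u, C^2 * Bfun (m+1) u ∂μ := by
    refine integral_mono_of_nonneg (Filter.Eventually.of_forall fun u => sq_nonneg _) hint_B ?_
    filter_upwards [haeIcc] with u hu
    exact pointwise_bound_s11 hΛ hΛd hC hu (by omega)
  -- step 2: compute/bound ∫ Bfun
  have hsplit : ∫ u, C^2 * Bfun (m+1) u ∂μ
      = C^2 * ((∫ u, mnu (m+1) u ^ 5 ∂μ) + ∑ k : Fin (m+1), ∫ u, gap (m+1) u (u k) ^ 5 ∂μ) := by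
    rw [integral_const_mul]
    congr 1
    unfold Bfun
    rw [integral_add hint_mnu (integrable_finset_sum Finset.univ (fun k _ => hint_gap k))]
    rw [integral_finset_sum Finset.univ (fun k _ => hint_gap k)]
  have hmnu_bound : ∫ u, mnu (m+1) u ^ 5 ∂μ ≤ 120 / ((m:ℝ)+1)^4 := by
    have h1 := moment5 μ (fun u => mnu (m+1) u) (meas_mnu (m+1)) hae_mnu (m+1)
      (fun s hs => surv_mnu (m+1) hs)
    refine le_trans h1 ?_
    push_cast
    have key : ((m:ℝ)+1)^4 ≤ ((m:ℝ)+1+1)*((m:ℝ)+1+2)*((m:ℝ)+1+3)*((m:ℝ)+1+4)*((m:ℝ)+1+5) := by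
      nlinarith [pow_nonneg hx 2, pow_nonneg hx 3, pow_nonneg hx 4, pow_nonneg hx 5]
    gcongr
  have hgap_bound : ∀ k : Fin (m+1), ∫ u, gap (m+1) u (u k) ^ 5 ∂μ ≤ 120 / ((m:ℝ)+1)^5 := by
    intro k
    have h1 := moment5 μ (fun u => gap (m+1) u (u k)) (meas_gap (m+1) k) (hae_gap k) m
      (fun s hs => surv_gap m k hs)
    refine le_trans h1 ?_
    have key : ((m:ℝ)+1)^5 ≤ ((m:ℝ)+1)*((m:ℝ)+2)*((m:ℝ)+3)*((m:ℝ)+4)*((m:ℝ)+5) := by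
      nlinarith [pow_nonneg hx 2, pow_nonneg hx 3, pow_nonneg hx 4, pow_nonneg hx 5]
    gcongr
  have hsum_gap : ∑ k : Fin (m+1), ∫ u, gap (m+1) u (u k) ^ 5 ∂μ ≤ 120 / ((m:ℝ)+1)^4 := by
    refine le_trans (Finset.sum_le_sum (fun k _ => hgap_bound k)) ?_
    rw [Finset.sum_const, Finset.card_univ, Fintype.card_fin, nsmul_eq_mul]
    push_cast
    have hpos : (0:ℝ) < (m:ℝ)+1 := by positivity
    have heq : ((m:ℝ)+1) * (120 / ((m:ℝ)+1)^5) = 120/((m:ℝ)+1)^4 := by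
      field_simp
    exact le_of_eq heq
  have htotal : ∫ u, ((∫ s in (0:ℝ)..1, Λ s) - qis Λ (m+1) u) ^ 2 ∂μ
      ≤ C^2 * (240 / ((m:ℝ)+1)^4) := by
    refine le_trans hstep1 ?_
    rw [hsplit]
    have hsum : (∫ u, mnu (m+1) u ^ 5 ∂μ) + ∑ k : Fin (m+1), ∫ u, gap (m+1) u (u k) ^ 5 ∂μ
        ≤ 240 / ((m:ℝ)+1)^4 := by
      have : (120:ℝ) / ((m:ℝ)+1)^4 + 120 / ((m:ℝ)+1)^4 = 240 / ((m:ℝ)+1)^4 := by ring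
      linarith [hmnu_bound, hsum_gap]
    exact mul_le_mul_of_nonneg_left hsum (sq_nonneg C)
  refine le_trans htotal ?_
  push_cast
  exact le_of_eq (by ring)
end

section
/- Let d ≥ 1 be an integer and ν, τ > 0. Set a = (ν + d)/2, b = ν/2 + 1, and s = ντ/2. Then ∫_{ℝ^d} (1 + ‖x‖²/ν)^{−(ν+d)/2} · (τ/(2π))^{d/2} · exp(−τ‖x‖²/2) dx = (s^a / Γ(a)) · ∫₀^∞ e^{−s t} t^{a−1} (1 + t)^{b−a−1} dt, i.e. the evidence for a multivariate Student-t likelihood under a multivariate Gaussian prior equals s^a U(a, b, s), where U is Kummer's confluent hypergeometric function of the second kind expressed by its standard integral representation. -/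
open MeasureTheory Real Set

lemma gauss_integrable (d : ℕ) {b : ℝ} (hb : 0 < b) :
    Integrable (fun v : EuclideanSpace ℝ (Fin d) => Real.exp (-b * ‖v‖ ^ 2)) := by
  have h := (GaussianFourier.integrable_cexp_neg_mul_sq_norm_add
    (V := EuclideanSpace ℝ (Fin d)) (b := (b : ℂ)) (by simpa using hb) 0 0).norm
  refine h.congr (Filter.Eventually.of_forall fun v => ?_)
  simp [Complex.norm_exp, ← Complex.ofReal_pow]

lemma gauss_integral (d : ℕ) {b : ℝ} (hb : 0 < b) :
    ∫ v : EuclideanSpace ℝ (Fin d), Real.exp (-b * ‖v‖ ^ 2)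
      = (Real.pi / b) ^ ((d : ℝ) / 2) := by
  have := GaussianFourier.integral_rexp_neg_mul_sq_norm (V := EuclideanSpace ℝ (Fin d)) hb
  simpa [finrank_euclideanSpace_fin] using this

/-- the evidence for a multivariate Student-`t` likelihood
(`d` dimensions, `ν` degrees of freedom) under a `N(0, τ⁻¹ I_d)` Gaussian
prior equals `s^a · U(a, b, s)` with `a = (ν+d)/2`, `b = ν/2 + 1`,
`s = ντ/2`, where `U` is Kummer's confluent hypergeometric function of the
second kind, expressed through its integral representation
`U(a, b, s) = (1/Γ(a)) ∫₀^∞ e^{−st} t^{a−1} (1+t)^{b−a−1} dt`. -/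
theorem stmt16 (d : ℕ) (hd : 1 ≤ d) (ν τ : ℝ) (hν : 0 < ν) (hτ : 0 < τ) :
    ∫ x : EuclideanSpace ℝ (Fin d),
        (1 + ‖x‖ ^ 2 / ν) ^ (-((ν + d) / 2))
          * (τ / (2 * Real.pi)) ^ ((d : ℝ) / 2)
          * Real.exp (-(τ * ‖x‖ ^ 2) / 2)
      = (ν * τ / 2) ^ ((ν + d) / 2) / Real.Gamma ((ν + d) / 2)
          * ∫ t in Set.Ioi (0:ℝ),
              Real.exp (-(ν * τ / 2) * t) * t ^ ((ν + d) / 2 - 1)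
                * (1 + t) ^ ((ν / 2 + 1) - (ν + d) / 2 - 1) := by
  have hπ := Real.pi_pos
  have hd0 : (0:ℝ) < d := by exact_mod_cast hd
  set a : ℝ := (ν + d) / 2 with ha_def
  set s : ℝ := ν * τ / 2 with hs_def
  have ha : 0 < a := by rw [ha_def]; positivity
  have hs : 0 < s := by rw [hs_def]; positivity
  have hΓ : 0 < Real.Gamma a := Real.Gamma_pos_of_pos ha
  set C : ℝ := (τ / (2 * Real.pi)) ^ ((d : ℝ) / 2) with hC_def
  have hCpos : 0 < C := by rw [hC_def]; positivity
  set F : EuclideanSpace ℝ (Fin d) × ℝ → ℝ :=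
    fun p => C * (p.2 ^ (a - 1) * Real.exp (-(s * p.2)) *
      Real.exp (-(τ * (1 + p.2) / 2) * ‖p.1‖ ^ 2)) with hF_def
  -- Step 1: the pointwise Gamma-integral representation
  have key1 : ∀ x : EuclideanSpace ℝ (Fin d),
      (1 + ‖x‖ ^ 2 / ν) ^ (-a) * C * Real.exp (-(τ * ‖x‖ ^ 2) / 2)
        = s ^ a / Real.Gamma a * ∫ t in Ioi (0:ℝ), F (x, t) := by
    intro x
    have hq : 0 < 1 + ‖x‖ ^ 2 / ν := by positivity
    have hr : 0 < s * (1 + ‖x‖ ^ 2 / ν) := by positivity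
    have hFx : ∀ t : ℝ, F (x, t)
        = (C * Real.exp (-(τ * ‖x‖ ^ 2) / 2))
          * (t ^ (a - 1) * Real.exp (-(s * (1 + ‖x‖ ^ 2 / ν) * t))) := by
      intro t
      have e1 : Real.exp (-(s * t)) * Real.exp (-(τ * (1 + t) / 2) * ‖x‖ ^ 2)
          = Real.exp (-(τ * ‖x‖ ^ 2) / 2) * Real.exp (-(s * (1 + ‖x‖ ^ 2 / ν) * t)) := by
        rw [← Real.exp_add, ← Real.exp_add]
        congr 1
        rw [hs_def]
        field_simp
        ring
      simp only [hF_def]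
      rw [mul_assoc (t ^ (a - 1)), e1]
      ring
    simp only [hFx]
    rw [MeasureTheory.integral_const_mul,
      Real.integral_rpow_mul_exp_neg_mul_Ioi ha hr,
      one_div, Real.inv_rpow hr.le, Real.mul_rpow hs.le hq.le, Real.rpow_neg hq.le]
    have h1 : (0:ℝ) < s ^ a := Real.rpow_pos_of_pos hs a
    have h2 : (0:ℝ) < (1 + ‖x‖ ^ 2 / ν) ^ a := Real.rpow_pos_of_pos hq a
    field_simp
  -- Step 2: the x-integral for fixed t > 0
  have key2 : ∀ t ∈ Ioi (0:ℝ),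
      (∫ x : EuclideanSpace ℝ (Fin d), F (x, t))
        = Real.exp (-(s * t)) * t ^ (a - 1) * (1 + t) ^ (-((d : ℝ) / 2)) := by
    intro t ht
    have ht' : (0:ℝ) < t := ht
    have hc : 0 < τ * (1 + t) / 2 := by positivity
    simp only [hF_def]
    rw [MeasureTheory.integral_const_mul, MeasureTheory.integral_const_mul,
      gauss_integral d hc]
    have hbase : τ / (2 * Real.pi) * (Real.pi / (τ * (1 + t) / 2)) = (1 + t)⁻¹ := by
      field_simp
    have hkey : C * (Real.pi / (τ * (1 + t) / 2)) ^ ((d : ℝ) / 2)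
        = (1 + t) ^ (-((d : ℝ) / 2)) := by
      rw [hC_def, ← Real.mul_rpow (by positivity) (by positivity), hbase,
        Real.inv_rpow (by positivity), ← Real.rpow_neg (by positivity)]
    calc C * (t ^ (a - 1) * Real.exp (-(s * t))
            * (Real.pi / (τ * (1 + t) / 2)) ^ ((d : ℝ) / 2))
        = (C * (Real.pi / (τ * (1 + t) / 2)) ^ ((d : ℝ) / 2))
            * (t ^ (a - 1) * Real.exp (-(s * t))) := by ring
      _ = Real.exp (-(s * t)) * t ^ (a - 1) * (1 + t) ^ (-((d : ℝ) / 2)) := by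
          rw [hkey]; ring
  -- measurability of F
  have hFmeas : AEStronglyMeasurable F
      ((volume : Measure (EuclideanSpace ℝ (Fin d))).prod (volume.restrict (Ioi 0))) := by
    apply Measurable.aestronglyMeasurable
    fun_prop
  -- integrability of F on the product
  have hInt : Integrable F
      ((volume : Measure (EuclideanSpace ℝ (Fin d))).prod (volume.restrict (Ioi 0))) := by
    rw [MeasureTheory.integrable_prod_iff' hFmeas]
    constructor
    · filter_upwards [self_mem_ae_restrict measurableSet_Ioi] with t ht
      have ht' : (0:ℝ) < t := ht
      have hc : 0 < τ * (1 + t) / 2 := by positivity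
      simp only [hF_def]
      exact ((gauss_integrable d hc).const_mul _).const_mul C
    · have hFnonneg : ∀ t ∈ Ioi (0:ℝ), ∀ x : EuclideanSpace ℝ (Fin d), 0 ≤ F (x, t) := by
        intro t ht x
        have ht' : (0:ℝ) < t := ht
        simp only [hF_def]
        positivity
      have heq : ∀ t ∈ Ioi (0:ℝ),
          (∫ x : EuclideanSpace ℝ (Fin d), ‖F (x, t)‖)
            = Real.exp (-(s * t)) * t ^ (a - 1) * (1 + t) ^ (-((d : ℝ) / 2)) := by
        intro t ht
        rw [← key2 t ht]
        refine integral_congr_ae (.of_forall fun x => ?_)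
        show ‖F (x, t)‖ = F (x, t)
        rw [Real.norm_eq_abs, abs_of_nonneg (hFnonneg t ht x)]
      have hmaj : IntegrableOn (fun t : ℝ => t ^ (a - 1) * Real.exp (-(s * t))) (Ioi 0) := by
        have := integrableOn_rpow_mul_exp_neg_mul_rpow (p := 1) (s := a - 1) (b := s)
          (by linarith) one_pos hs
        simpa [Real.rpow_one, neg_mul] using this
      have hG : IntegrableOn
          (fun t : ℝ => Real.exp (-(s * t)) * t ^ (a - 1) * (1 + t) ^ (-((d : ℝ) / 2)))
          (Ioi 0) := by
        refine hmaj.mono' ?_ ?_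
        · apply Measurable.aestronglyMeasurable
          fun_prop
        · filter_upwards [self_mem_ae_restrict measurableSet_Ioi] with t ht
          have ht' : (0:ℝ) < t := ht
          have h1 : (1 + t) ^ (-((d : ℝ) / 2)) ≤ 1 :=
            Real.rpow_le_one_of_one_le_of_nonpos (by linarith) (neg_nonpos.mpr (by positivity))
          rw [Real.norm_eq_abs, abs_of_nonneg (by positivity)]
          calc Real.exp (-(s * t)) * t ^ (a - 1) * (1 + t) ^ (-((d : ℝ) / 2))
              ≤ Real.exp (-(s * t)) * t ^ (a - 1) * 1 := by
                apply mul_le_mul_of_nonneg_left h1 (by positivity)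
            _ = t ^ (a - 1) * Real.exp (-(s * t)) := by ring
      refine hG.congr ?_
      filter_upwards [self_mem_ae_restrict measurableSet_Ioi] with t ht
      exact (heq t ht).symm
  -- Assemble
  calc ∫ x : EuclideanSpace ℝ (Fin d),
          (1 + ‖x‖ ^ 2 / ν) ^ (-a) * C * Real.exp (-(τ * ‖x‖ ^ 2) / 2)
      = ∫ x : EuclideanSpace ℝ (Fin d),
          s ^ a / Real.Gamma a * ∫ t in Ioi (0:ℝ), F (x, t) := by
        exact integral_congr_ae (.of_forall fun x => key1 x)
    _ = s ^ a / Real.Gamma a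
          * ∫ x : EuclideanSpace ℝ (Fin d), ∫ t in Ioi (0:ℝ), F (x, t) :=
        MeasureTheory.integral_const_mul _ _
    _ = s ^ a / Real.Gamma a
          * ∫ t in Ioi (0:ℝ), ∫ x : EuclideanSpace ℝ (Fin d), F (x, t) := by
        rw [MeasureTheory.integral_integral_swap hInt]
    _ = s ^ a / Real.Gamma a
          * ∫ t in Ioi (0:ℝ),
              Real.exp (-(s * t)) * t ^ (a - 1) * (1 + t) ^ (-((d : ℝ) / 2)) := by
        rw [setIntegral_congr_fun measurableSet_Ioi fun t ht => key2 t ht]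
    _ = s ^ a / Real.Gamma a
          * ∫ t in Ioi (0:ℝ),
              Real.exp (-s * t) * t ^ (a - 1) * (1 + t) ^ (ν / 2 + 1 - a - 1) := by
        congr 1
        refine setIntegral_congr_fun measurableSet_Ioi fun t ht => ?_
        rw [show ν / 2 + 1 - a - 1 = -((d : ℝ) / 2) by rw [ha_def]; ring, neg_mul]
end
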